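/- arXiv:2006.01083 — 6 statements merged into one kernel-verified Lean document; each statement's English description precedes it below -/
import Mathlib

section
/- Let (X₁, F₁, μ₁), (X₂, F₂, μ₂), (Y₁, G₁, ν₁), (Y₂, G₂, ν₂) be σ-finite measure spaces, X := X₁ × X₂ with μ := μ₁ ⊗ μ₂, Y := Y₁ × Y₂ with ν := ν₁ ⊗ ν₂, and let m : X × Y → (0,∞) be measurable. Then every measurable K : X × Y → ℂ satisfies ‖K‖_{𝒜_m(X,Y)} ≤ ‖K‖_{𝓑_m(X,Y)}, where ‖K‖_{𝒜_m} := ‖m·K‖_{𝒜(X,Y)}; in particular, every K ∈ 𝓑_m(X,Y) satisfies ‖m·K‖_{𝒜(X,Y)} < ∞. -/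
open MeasureTheory ENNReal Filter

noncomputable section

/-- `L^p` norm (in `[0,∞]`) of an `ℝ≥0∞`-valued function. -/
def lpNormENN {α : Type*} [MeasurableSpace α] (μ : Measure α) (p : ℝ≥0∞)
    (f : α → ℝ≥0∞) : ℝ≥0∞ :=
  if p = ∞ then essSup f μ else (∫⁻ a, f a ^ p.toReal ∂μ) ^ (1 / p.toReal)

/-- Mixed `L^{p,q}` norm of an `ℝ≥0∞`-valued function on a product space. -/
def mixedNormENN {α β : Type*} [MeasurableSpace α] [MeasurableSpace β]
    (μ₁ : Measure α) (μ₂ : Measure β) (p q : ℝ≥0∞) (f : α × β → ℝ≥0∞) : ℝ≥0∞ :=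
  lpNormENN μ₂ q fun x₂ => lpNormENN μ₁ p fun x₁ => f (x₁, x₂)

/-- Mixed `L^{p,q}` norm of a complex-valued function on a product space. -/
def mixedNorm {α β : Type*} [MeasurableSpace α] [MeasurableSpace β]
    (μ₁ : Measure α) (μ₂ : Measure β) (p q : ℝ≥0∞) (f : α × β → ℂ) : ℝ≥0∞ :=
  mixedNormENN μ₁ μ₂ p q fun x => (‖f x‖₊ : ℝ≥0∞)

/-- The Schur constant `C₁(K)`. -/
def schurC1 {X Y : Type*} [MeasurableSpace X] [MeasurableSpace Y]
    (μ : Measure X) (ν : Measure Y) (K : X × Y → ℝ≥0∞) : ℝ≥0∞ :=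
  essSup (fun x => ∫⁻ y, K (x, y) ∂ν) μ

/-- The Schur constant `C₂(K)`. -/
def schurC2 {X Y : Type*} [MeasurableSpace X] [MeasurableSpace Y]
    (μ : Measure X) (ν : Measure Y) (K : X × Y → ℝ≥0∞) : ℝ≥0∞ :=
  essSup (fun y => ∫⁻ x, K (x, y) ∂μ) ν

/-- The Schur constant `C₃(K)`. -/
def schurC3 {X₁ X₂ Y₁ Y₂ : Type*} [MeasurableSpace X₁] [MeasurableSpace X₂]
    [MeasurableSpace Y₁] [MeasurableSpace Y₂]
    (μ₁ : Measure X₁) (μ₂ : Measure X₂) (ν₁ : Measure Y₁) (ν₂ : Measure Y₂)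
    (K : (X₁ × X₂) × (Y₁ × Y₂) → ℝ≥0∞) : ℝ≥0∞ :=
  essSup (fun x₂ =>
    ∫⁻ y₂, essSup (fun y₁ => ∫⁻ x₁, K ((x₁, x₂), (y₁, y₂)) ∂μ₁) ν₁ ∂ν₂) μ₂

/-- The Schur constant `C₄(K)`. -/
def schurC4 {X₁ X₂ Y₁ Y₂ : Type*} [MeasurableSpace X₁] [MeasurableSpace X₂]
    [MeasurableSpace Y₁] [MeasurableSpace Y₂]
    (μ₁ : Measure X₁) (μ₂ : Measure X₂) (ν₁ : Measure Y₁) (ν₂ : Measure Y₂)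
    (K : (X₁ × X₂) × (Y₁ × Y₂) → ℝ≥0∞) : ℝ≥0∞ :=
  essSup (fun y₂ =>
    ∫⁻ x₂, essSup (fun x₁ => ∫⁻ y₁, K ((x₁, x₂), (y₁, y₂)) ∂ν₁) μ₁ ∂μ₂) ν₂

/-- The kernel norm `‖K‖_{𝒜(U,V)}`. -/
def normA {U V : Type*} [MeasurableSpace U] [MeasurableSpace V]
    (lam : Measure U) (kap : Measure V) (K : U × V → ℝ≥0∞) : ℝ≥0∞ :=
  max (essSup (fun u => ∫⁻ v, K (u, v) ∂kap) lam)
      (essSup (fun v => ∫⁻ u, K (u, v) ∂lam) kap)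

/-- The kernel norm `‖K‖_{𝓑(X,Y)}` for an `ℝ≥0∞`-valued kernel. -/
def normB {X₁ X₂ Y₁ Y₂ : Type*} [MeasurableSpace X₁] [MeasurableSpace X₂]
    [MeasurableSpace Y₁] [MeasurableSpace Y₂]
    (μ₁ : Measure X₁) (μ₂ : Measure X₂) (ν₁ : Measure Y₁) (ν₂ : Measure Y₂)
    (K : (X₁ × X₂) × (Y₁ × Y₂) → ℝ≥0∞) : ℝ≥0∞ :=
  normA μ₂ ν₂ fun s => normA μ₁ ν₁ fun t => K ((t.1, s.1), (t.2, s.2))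

/-- The weighted kernel norm `‖K‖_{𝓑_m(X,Y)}` for an `ℝ≥0∞`-valued kernel. -/
def normBmENN {X₁ X₂ Y₁ Y₂ : Type*} [MeasurableSpace X₁] [MeasurableSpace X₂]
    [MeasurableSpace Y₁] [MeasurableSpace Y₂]
    (μ₁ : Measure X₁) (μ₂ : Measure X₂) (ν₁ : Measure Y₁) (ν₂ : Measure Y₂)
    (m : (X₁ × X₂) × (Y₁ × Y₂) → ℝ) (K : (X₁ × X₂) × (Y₁ × Y₂) → ℝ≥0∞) : ℝ≥0∞ :=
  normB μ₁ μ₂ ν₁ ν₂ fun z => ENNReal.ofReal (m z) * K z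

/-- The weighted kernel norm `‖K‖_{𝓑_m(X,Y)}` for a complex-valued kernel. -/
def normBm {X₁ X₂ Y₁ Y₂ : Type*} [MeasurableSpace X₁] [MeasurableSpace X₂]
    [MeasurableSpace Y₁] [MeasurableSpace Y₂]
    (μ₁ : Measure X₁) (μ₂ : Measure X₂) (ν₁ : Measure Y₁) (ν₂ : Measure Y₂)
    (m : (X₁ × X₂) × (Y₁ × Y₂) → ℝ) (K : (X₁ × X₂) × (Y₁ × Y₂) → ℂ) : ℝ≥0∞ :=
  normBmENN μ₁ μ₂ ν₁ ν₂ m fun z => (‖K z‖₊ : ℝ≥0∞)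

/-- The norm of the space `𝒢 = L¹ ∩ L^∞ ∩ L^{1,∞} ∩ L^{∞,1}`. -/
def Gnorm {α β : Type*} [MeasurableSpace α] [MeasurableSpace β]
    (μ₁ : Measure α) (μ₂ : Measure β) (f : α × β → ℂ) : ℝ≥0∞ :=
  max (max (eLpNorm f 1 (μ₁.prod μ₂)) (eLpNorm f ∞ (μ₁.prod μ₂)))
      (max (mixedNorm μ₁ μ₂ 1 ∞ f) (mixedNorm μ₁ μ₂ ∞ 1 f))

/-- The norm of the sum space `𝓗 = L¹ + L^∞ + L^{1,∞} + L^{∞,1}`. -/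
def Hnorm {α β : Type*} [MeasurableSpace α] [MeasurableSpace β]
    (μ₁ : Measure α) (μ₂ : Measure β) (f : α × β → ℂ) : ℝ≥0∞ :=
  ⨅ (g : (α × β → ℂ) × (α × β → ℂ) × (α × β → ℂ) × (α × β → ℂ))
    (_ : Measurable g.1 ∧ Measurable g.2.1 ∧ Measurable g.2.2.1 ∧ Measurable g.2.2.2 ∧
      f = g.1 + g.2.1 + g.2.2.1 + g.2.2.2),
    eLpNorm g.1 1 (μ₁.prod μ₂) + eLpNorm g.2.1 ∞ (μ₁.prod μ₂) +
      mixedNorm μ₁ μ₂ 1 ∞ g.2.2.1 + mixedNorm μ₁ μ₂ ∞ 1 g.2.2.2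

/-- The functional `ρ(f) = inf { ‖g‖_∞ + ‖h‖_1 : f = g + h }`. -/
def rho {α : Type*} [MeasurableSpace α] (μ : Measure α) (f : α → ℝ≥0∞) : ℝ≥0∞ :=
  ⨅ (gh : (α → ℝ≥0∞) × (α → ℝ≥0∞))
    (_ : Measurable gh.1 ∧ Measurable gh.2 ∧ f = gh.1 + gh.2),
    essSup gh.1 μ + ∫⁻ x, gh.2 x ∂μ


/-- Exchange of essential supremum and integral (one-sided inequality). -/
lemma essSup_lintegral_le_aux {α δ : Type*} [MeasurableSpace α] [MeasurableSpace δ]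
    (μ : Measure α) (ν : Measure δ) [SigmaFinite μ] [SigmaFinite ν]
    (F : α × δ → ℝ≥0∞) (hF : Measurable F) :
    essSup (fun a => ∫⁻ d, F (a, d) ∂ν) μ ≤ ∫⁻ d, essSup (fun a => F (a, d)) μ ∂ν := by
  by_contra h
  push_neg at h
  obtain ⟨c, hc1, hc2⟩ := exists_between h
  have hGmeas : Measurable fun a => ∫⁻ d, F (a, d) ∂ν := hF.lintegral_prod_right'
  set A := {a | c < ∫⁻ d, F (a, d) ∂ν} with hAdef
  have hA : MeasurableSet A := measurableSet_lt measurable_const hGmeas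
  have hApos : 0 < μ A := by
    rcases eq_zero_or_pos (μ A) with h0 | h0
    · exfalso
      have hae : ∀ᵐ a ∂μ, (fun a => ∫⁻ d, F (a, d) ∂ν) a ≤ c := by
        rw [ae_iff]; simpa [hAdef, not_le] using h0
      exact absurd (essSup_le_of_ae_le c hae) hc2.not_ge
    · exact h0
  obtain ⟨B, hBmeas, hBsub, hBpos, hBfin⟩ := Measure.exists_subset_measure_lt_top hA hApos
  have step1 : c * μ B ≤ ∫⁻ a in B, ∫⁻ d, F (a, d) ∂ν ∂μ := by
    rw [← setLIntegral_const B c]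
    refine setLIntegral_mono hGmeas fun a ha => (hBsub ha).le
  have step2 : (∫⁻ a in B, ∫⁻ d, F (a, d) ∂ν ∂μ) = ∫⁻ d, ∫⁻ a in B, F (a, d) ∂μ ∂ν :=
    lintegral_lintegral_swap hF.aemeasurable
  have step3 : (∫⁻ d, ∫⁻ a in B, F (a, d) ∂μ ∂ν)
      ≤ ∫⁻ d, essSup (fun a => F (a, d)) μ * μ B ∂ν := by
    refine lintegral_mono fun d => ?_
    calc ∫⁻ a in B, F (a, d) ∂μ
        ≤ ∫⁻ _ in B, essSup (fun a => F (a, d)) μ ∂μ :=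
          lintegral_mono_ae (ae_restrict_of_ae (ENNReal.ae_le_essSup _))
      _ = essSup (fun a => F (a, d)) μ * μ B := setLIntegral_const _ _
  have step4 : (∫⁻ d, essSup (fun a => F (a, d)) μ * μ B ∂ν)
      = (∫⁻ d, essSup (fun a => F (a, d)) μ ∂ν) * μ B :=
    lintegral_mul_const' (μ B) _ hBfin.ne
  have : c * μ B ≤ (∫⁻ d, essSup (fun a => F (a, d)) μ ∂ν) * μ B :=
    step1.trans (step2.le.trans (step3.trans step4.le))
  rw [ENNReal.mul_le_mul_iff_left hBpos.ne' hBfin.ne] at this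
  exact absurd this hc1.not_ge


lemma key_essSup_le {α β γ δ : Type*} [MeasurableSpace α] [MeasurableSpace β]
    [MeasurableSpace γ] [MeasurableSpace δ]
    (μ₁ : Measure α) (μ₂ : Measure β) (ν₁ : Measure γ) (ν₂ : Measure δ)
    [SigmaFinite μ₁] [SigmaFinite μ₂] [SigmaFinite ν₁] [SigmaFinite ν₂]
    (f : (α × β) × (γ × δ) → ℝ≥0∞) (hf : Measurable f) :
    essSup (fun x : α × β => ∫⁻ y : γ × δ, f (x, y) ∂(ν₁.prod ν₂)) (μ₁.prod μ₂) ≤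
      essSup (fun b => ∫⁻ d, essSup (fun a => ∫⁻ c, f ((a, b), (c, d)) ∂ν₁) μ₁ ∂ν₂) μ₂ := by
  have hG : Measurable fun x : α × β => ∫⁻ y, f (x, y) ∂(ν₁.prod ν₂) :=
    hf.lintegral_prod_right'
  set C := essSup (fun b => ∫⁻ d, essSup (fun a => ∫⁻ c, f ((a, b), (c, d)) ∂ν₁) μ₁ ∂ν₂) μ₂
    with hC
  refine essSup_le_of_ae_le C ?_
  rw [Filter.EventuallyLE, ae_iff]
  have hS : MeasurableSet {x : α × β | C < ∫⁻ y, f (x, y) ∂(ν₁.prod ν₂)} :=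
    measurableSet_lt measurable_const hG
  have hrw : {x : α × β | ¬ (fun x => ∫⁻ y, f (x, y) ∂(ν₁.prod ν₂)) x ≤ C}
      = {x : α × β | C < ∫⁻ y, f (x, y) ∂(ν₁.prod ν₂)} := by
    ext x; simp [not_le]
  rw [hrw, Measure.prod_apply_symm hS]
  have hae : ∀ᵐ b ∂μ₂,
      μ₁ ((fun a => (a, b)) ⁻¹' {x : α × β | C < ∫⁻ y, f (x, y) ∂(ν₁.prod ν₂)}) = 0 := by
    filter_upwards [ENNReal.ae_le_essSup
      (fun b => ∫⁻ d, essSup (fun a => ∫⁻ c, f ((a, b), (c, d)) ∂ν₁) μ₁ ∂ν₂)] with b hb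
    have hm1 : Measurable fun p : (α × δ) × γ => f ((p.1.1, b), (p.2, p.1.2)) :=
      hf.comp (by fun_prop)
    have hmF : Measurable fun p : α × δ => ∫⁻ c, f ((p.1, b), (c, p.2)) ∂ν₁ :=
      hm1.lintegral_prod_right'
    have hswap := essSup_lintegral_le_aux μ₁ ν₂
      (fun p : α × δ => ∫⁻ c, f ((p.1, b), (c, p.2)) ∂ν₁) hmF
    have hle : essSup (fun a => ∫⁻ d, ∫⁻ c, f ((a, b), (c, d)) ∂ν₁ ∂ν₂) μ₁ ≤ C :=
      hswap.trans hb
    have haea : ∀ᵐ a ∂μ₁, (∫⁻ y, f ((a, b), y) ∂(ν₁.prod ν₂)) ≤ C := by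
      filter_upwards [ENNReal.ae_le_essSup
        (fun a => ∫⁻ d, ∫⁻ c, f ((a, b), (c, d)) ∂ν₁ ∂ν₂)] with a ha
      have heq : (∫⁻ y, f ((a, b), y) ∂(ν₁.prod ν₂))
          = ∫⁻ d, ∫⁻ c, f ((a, b), (c, d)) ∂ν₁ ∂ν₂ :=
        lintegral_prod_symm' _ (hf.comp (by fun_prop : Measurable fun y : γ × δ => ((a, b), y)))
      rw [heq]; exact ha.trans hle
    rw [ae_iff] at haea
    simpa [Set.preimage, not_le] using haea
  calc ∫⁻ b, μ₁ ((fun a => (a, b)) ⁻¹' {x : α × β | C < ∫⁻ y, f (x, y) ∂(ν₁.prod ν₂)}) ∂μ₂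
      = ∫⁻ _, (0 : ℝ≥0∞) ∂μ₂ := lintegral_congr_ae hae
    _ = 0 := lintegral_zero

/-- `‖K‖_{𝒜_m} ≤ ‖K‖_{𝓑_m}` (Proposition `prop:NewKernelModuleBasicProperties1` (4)). -/
theorem Am_le_Bm
    {X₁ X₂ Y₁ Y₂ : Type*} [MeasurableSpace X₁] [MeasurableSpace X₂]
    [MeasurableSpace Y₁] [MeasurableSpace Y₂]
    (μ₁ : Measure X₁) (μ₂ : Measure X₂) (ν₁ : Measure Y₁) (ν₂ : Measure Y₂)
    [SigmaFinite μ₁] [SigmaFinite μ₂] [SigmaFinite ν₁] [SigmaFinite ν₂]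
    (m : (X₁ × X₂) × (Y₁ × Y₂) → ℝ) (hm : Measurable m) (hm_pos : ∀ z, 0 < m z)
    (K : (X₁ × X₂) × (Y₁ × Y₂) → ℂ) (hK : Measurable K) :
    normA (μ₁.prod μ₂) (ν₁.prod ν₂)
        (fun z => ENNReal.ofReal (m z) * (‖K z‖₊ : ℝ≥0∞)) ≤
      normBm μ₁ μ₂ ν₁ ν₂ m K ∧
    (normBm μ₁ μ₂ ν₁ ν₂ m K < ∞ →
      normA (μ₁.prod μ₂) (ν₁.prod ν₂)
        (fun z => ENNReal.ofReal (m z) * (‖K z‖₊ : ℝ≥0∞)) < ∞) := by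

  set L := fun z : (X₁ × X₂) × (Y₁ × Y₂) => ENNReal.ofReal (m z) * (‖K z‖₊ : ℝ≥0∞) with hL
  have hLmeas : Measurable L := hm.ennreal_ofReal.mul hK.nnnorm.coe_nnreal_ennreal
  have main : normA (μ₁.prod μ₂) (ν₁.prod ν₂) L ≤ normBm μ₁ μ₂ ν₁ ν₂ m K := by
    rw [normBm, normBmENN, normB, normA, normA]
    apply max_le
    · refine le_trans (key_essSup_le μ₁ μ₂ ν₁ ν₂ L hLmeas) (le_trans ?_ (le_max_left _ _))
      refine essSup_mono_ae (Eventually.of_forall fun b => lintegral_mono fun d => ?_)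
      exact le_max_left _ _
    · refine le_trans (key_essSup_le ν₁ ν₂ μ₁ μ₂ (fun z => L (z.2, z.1))
        (hLmeas.comp measurable_swap)) (le_trans ?_ (le_max_right _ _))
      refine essSup_mono_ae (Eventually.of_forall fun b => lintegral_mono fun d => ?_)
      exact le_max_right _ _
  exact ⟨main, fun h => lt_of_le_of_lt main h⟩

end
end

section
/- Let (X₁, F₁, μ₁), (X₂, F₂, μ₂), (Y₁, G₁, ν₁), (Y₂, G₂, ν₂), (Z₁, H₁, ϱ₁), (Z₂, H₂, ϱ₂) be σ-finite measure spaces, X := X₁ × X₂ with μ := μ₁ ⊗ μ₂, Y := Y₁ × Y₂ with ν := ν₁ ⊗ ν₂, Z := Z₁ × Z₂ with ϱ := ϱ₁ ⊗ ϱ₂. Let ω : X × Y → (0,∞), σ : Y × Z → (0,∞), τ : X × Z → (0,∞) be measurable with τ(x,z) ≤ C · ω(x,y) · σ(y,z) for all x ∈ X, y ∈ Y, z ∈ Z and some constant C > 0. If K ∈ 𝓑_ω(X,Y) and L ∈ 𝓑_σ(Y,Z), then the product kernel (K ⊙ L)(x,z) := ∫_Y K(x,y) L(y,z) dν(y) is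 defined by an absolutely convergent integral for (μ ⊗ ϱ)-almost all (x,z), K ⊙ L ∈ 𝓑_τ(X,Z), and ‖K ⊙ L‖_{𝓑_τ} ≤ C · ‖K‖_{𝓑_ω} · ‖L‖_{𝓑_σ}. -/
open MeasureTheory ENNReal Filter

noncomputable section

section SchurHelperLemmas

variable {α β γ : Type*} [MeasurableSpace α] [MeasurableSpace β] [MeasurableSpace γ]

lemma essSup_eq_iInf_rat (μ : Measure α) (g : α → ℝ≥0∞) :
    essSup g μ = ⨅ q : ℚ,
      if μ {a | (Real.toNNReal q : ℝ≥0∞) < g a} = 0 then (Real.toNNReal q : ℝ≥0∞) else ∞ := by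
  classical
  refine le_antisymm (le_iInf fun q => ?_) ?_
  · split_ifs with h
    · refine essSup_le_of_ae_le _ ?_
      have : ∀ᵐ a ∂μ, g a ≤ (Real.toNNReal q : ℝ≥0∞) := by
        rw [ae_iff]; simpa [not_le] using h
      exact this
    · exact le_top
  · by_contra hlt
    push_neg at hlt
    obtain ⟨q, _, h1, h2⟩ := ENNReal.lt_iff_exists_rat_btwn.mp hlt
    have hc : μ {a | (Real.toNNReal q : ℝ≥0∞) < g a} = 0 := by
      have hae := ENNReal.ae_le_essSup (μ := μ) g
      rw [ae_iff] at hae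
      refine measure_mono_null (fun a ha => ?_) hae
      simp only [Set.mem_setOf_eq, not_le] at ha ⊢
      exact h1.trans ha
    have hle : (⨅ q : ℚ,
        if μ {a | (Real.toNNReal q : ℝ≥0∞) < g a} = 0 then (Real.toNNReal q : ℝ≥0∞) else ∞)
        ≤ (Real.toNNReal q : ℝ≥0∞) := by
      refine iInf_le_of_le q ?_
      rw [if_pos hc]
    exact absurd h2 hle.not_gt

lemma measurable_essSup_param (μ : Measure α) [SFinite μ] {f : α × β → ℝ≥0∞}
    (hf : Measurable f) : Measurable fun b => essSup (fun a => f (a, b)) μ := by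
  classical
  simp_rw [essSup_eq_iInf_rat]
  refine Measurable.iInf fun q => ?_
  have hs : MeasurableSet {p : α × β | (Real.toNNReal q : ℝ≥0∞) < f p} :=
    measurableSet_lt measurable_const hf
  have hm : Measurable fun b => μ ((fun a => (a, b)) ⁻¹' {p : α × β | (Real.toNNReal q : ℝ≥0∞) < f p}) :=
    measurable_measure_prodMk_right hs
  exact Measurable.ite (hm (measurableSet_singleton 0)) measurable_const measurable_const

lemma measurableSet_ae_mem (ν : Measure β) [SFinite ν] {s : Set (α × β)} (hs : MeasurableSet s) :
    MeasurableSet {a | ∀ᵐ b ∂ν, (a, b) ∈ s} := by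
  have : {a | ∀ᵐ b ∂ν, (a, b) ∈ s} = (fun a => ν (Prod.mk a ⁻¹' sᶜ)) ⁻¹' {0} := by
    ext a
    simp only [Set.mem_setOf_eq, Set.mem_preimage, Set.mem_singleton_iff, ae_iff]
    rfl
  rw [this]
  exact measurable_measure_prodMk_left hs.compl (measurableSet_singleton 0)


lemma essSup_lintegral_le (μ : Measure α) (ν : Measure β) [SFinite μ] [SFinite ν]
    {f : α × β → ℝ≥0∞} (hf : Measurable f) :
    essSup (fun a => ∫⁻ b, f (a, b) ∂ν) μ ≤ ∫⁻ b, essSup (fun a => f (a, b)) μ ∂ν := by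
  set g := fun b => essSup (fun a => f (a, b)) μ with hgdef
  have hgm : Measurable g := measurable_essSup_param μ hf
  have hS : MeasurableSet {p : α × β | g p.2 < f p} :=
    measurableSet_lt (hgm.comp measurable_snd) hf
  have hswapS : MeasurableSet {p : β × α | g p.1 < f p.swap} :=
    measurableSet_lt (hgm.comp measurable_fst) (hf.comp measurable_swap)
  have hnull1 : (ν.prod μ) {p : β × α | g p.1 < f p.swap} = 0 := by
    rw [Measure.measure_prod_null hswapS]
    refine Filter.Eventually.of_forall fun b => ?_
    have h := ENNReal.ae_le_essSup (μ := μ) (fun a => f (a, b))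
    rw [ae_iff] at h
    refine measure_mono_null (fun a ha => ?_) h
    simp only [Set.mem_preimage, Set.mem_setOf_eq, not_le] at ha ⊢
    exact ha
  have hnull : (μ.prod ν) {p : α × β | g p.2 < f p} = 0 := by
    rw [← Measure.prod_swap, Measure.map_apply measurable_swap hS]
    exact hnull1
  have hae : ∀ᵐ a ∂μ, ∀ᵐ b ∂ν, f (a, b) ≤ g b := by
    have h : ∀ᵐ p ∂(μ.prod ν), f p ≤ g p.2 := by
      rw [ae_iff]
      simpa [not_le] using hnull
    exact Measure.ae_ae_of_ae_prod h
  refine essSup_le_of_ae_le _ ?_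
  filter_upwards [hae] with a ha
  exact lintegral_mono_ae ha


lemma normA_mono {lam : Measure α} {kap : Measure β} {f g : α × β → ℝ≥0∞}
    (h : ∀ p, f p ≤ g p) : normA lam kap f ≤ normA lam kap g :=
  max_le_max
    (essSup_mono_ae (Filter.Eventually.of_forall fun u => lintegral_mono fun v => h (u, v)))
    (essSup_mono_ae (Filter.Eventually.of_forall fun v => lintegral_mono fun u => h (u, v)))

lemma normA_const_mul (lam : Measure α) (kap : Measure β) {c : ℝ≥0∞} (hc : c ≠ ∞)
    (f : α × β → ℝ≥0∞) : normA lam kap (fun p => c * f p) = c * normA lam kap f := by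
  have hmono : Monotone fun x : ℝ≥0∞ => c * x := fun _ _ h => mul_le_mul_right h c
  unfold normA
  simp_rw [lintegral_const_mul' c _ hc, ENNReal.essSup_const_mul]
  exact (hmono.map_max).symm

lemma normA_schur (μ : Measure α) (ν : Measure β) (ρ : Measure γ)
    [SFinite μ] [SFinite ν] [SFinite ρ]
    {A : α × β → ℝ≥0∞} {B : β × γ → ℝ≥0∞} (hA : Measurable A) (hB : Measurable B) :
    normA μ ρ (fun p => ∫⁻ b, A (p.1, b) * B (b, p.2) ∂ν) ≤ normA μ ν A * normA ν ρ B := by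
  set e1A := essSup (fun a => ∫⁻ b, A (a, b) ∂ν) μ with he1A
  set e2A := essSup (fun b => ∫⁻ a, A (a, b) ∂μ) ν with he2A
  set e1B := essSup (fun b => ∫⁻ c, B (b, c) ∂ρ) ν with he1B
  set e2B := essSup (fun c => ∫⁻ b, B (b, c) ∂ν) ρ with he2B
  refine max_le ?_ ?_
  · -- first component
    refine le_trans ?_ (mul_le_mul' (le_max_left e1A e2A) (le_max_left e1B e2B))
    refine essSup_le_of_ae_le _ ?_
    filter_upwards [ENNReal.ae_le_essSup (μ := μ) (fun a => ∫⁻ b, A (a, b) ∂ν)] with a ha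
    have hswap : ∫⁻ c, ∫⁻ b, A (a, b) * B (b, c) ∂ν ∂ρ
        = ∫⁻ b, ∫⁻ c, A (a, b) * B (b, c) ∂ρ ∂ν := by
      refine lintegral_lintegral_swap ?_
      exact ((hA.comp (measurable_const.prodMk measurable_snd)).mul
        (hB.comp (measurable_snd.prodMk measurable_fst))).aemeasurable
    calc ∫⁻ c, ∫⁻ b, A (a, b) * B (b, c) ∂ν ∂ρ
        = ∫⁻ b, A (a, b) * ∫⁻ c, B (b, c) ∂ρ ∂ν := by
          rw [hswap]
          refine lintegral_congr fun b => ?_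
          exact lintegral_const_mul _ (hB.comp (measurable_const.prodMk measurable_id))
      _ ≤ ∫⁻ b, A (a, b) * e1B ∂ν := by
          refine lintegral_mono_ae ?_
          filter_upwards [ENNReal.ae_le_essSup (μ := ν) (fun b => ∫⁻ c, B (b, c) ∂ρ)] with b hb
          exact mul_le_mul_right hb _
      _ = (∫⁻ b, A (a, b) ∂ν) * e1B :=
          lintegral_mul_const _ (hA.comp (measurable_const.prodMk measurable_id))
      _ ≤ e1A * e1B := mul_le_mul_left ha _
  · -- second component
    refine le_trans ?_ (mul_le_mul' (le_max_right e1A e2A) (le_max_right e1B e2B))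
    refine essSup_le_of_ae_le _ ?_
    filter_upwards [ENNReal.ae_le_essSup (μ := ρ) (fun c => ∫⁻ b, B (b, c) ∂ν)] with c hc
    have hswap : ∫⁻ a, ∫⁻ b, A (a, b) * B (b, c) ∂ν ∂μ
        = ∫⁻ b, ∫⁻ a, A (a, b) * B (b, c) ∂μ ∂ν := by
      refine lintegral_lintegral_swap ?_
      exact ((hA.comp (measurable_fst.prodMk measurable_snd)).mul
        (hB.comp (measurable_snd.prodMk measurable_const))).aemeasurable
    calc ∫⁻ a, ∫⁻ b, A (a, b) * B (b, c) ∂ν ∂μ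
        = ∫⁻ b, (∫⁻ a, A (a, b) ∂μ) * B (b, c) ∂ν := by
          rw [hswap]
          refine lintegral_congr fun b => ?_
          exact lintegral_mul_const _ (hA.comp (measurable_id.prodMk measurable_const))
      _ ≤ ∫⁻ b, e2A * B (b, c) ∂ν := by
          refine lintegral_mono_ae ?_
          filter_upwards [ENNReal.ae_le_essSup (μ := ν) (fun b => ∫⁻ a, A (a, b) ∂μ)] with b hb
          exact mul_le_mul_left hb _
      _ = e2A * ∫⁻ b, B (b, c) ∂ν :=
          lintegral_const_mul _ (hB.comp (measurable_id.prodMk measurable_const))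
      _ ≤ e2A * e2B := mul_le_mul_right hc _

lemma normA_lintegral_le (ν : Measure γ) (μ : Measure α) (kap : Measure β)
    [SFinite ν] [SFinite μ] [SFinite kap]
    {M : γ × (α × β) → ℝ≥0∞} (hM : Measurable M) :
    normA μ kap (fun t => ∫⁻ c, M (c, t) ∂ν) ≤ ∫⁻ c, normA μ kap (fun t => M (c, t)) ∂ν := by
  refine max_le ?_ ?_
  · have hswap : ∀ a : α, ∫⁻ b, ∫⁻ c, M (c, (a, b)) ∂ν ∂kap
        = ∫⁻ c, ∫⁻ b, M (c, (a, b)) ∂kap ∂ν := fun a =>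
      lintegral_lintegral_swap ((hM.comp (measurable_snd.prodMk
        (measurable_const.prodMk measurable_fst))).aemeasurable)
    calc essSup (fun a => ∫⁻ b, ∫⁻ c, M (c, (a, b)) ∂ν ∂kap) μ
        = essSup (fun a => ∫⁻ c, ∫⁻ b, M (c, (a, b)) ∂kap ∂ν) μ := by
          exact essSup_congr_ae (Filter.Eventually.of_forall hswap)
      _ ≤ ∫⁻ c, essSup (fun a => ∫⁻ b, M (c, (a, b)) ∂kap) μ ∂ν := by
          refine essSup_lintegral_le μ ν (f := fun q : α × γ => ∫⁻ b, M (q.2, (q.1, b)) ∂kap) ?_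
          exact Measurable.lintegral_prod_right' (hM.comp
            ((measurable_fst.snd).prodMk ((measurable_fst.fst).prodMk measurable_snd)))
      _ ≤ ∫⁻ c, normA μ kap (fun t => M (c, t)) ∂ν :=
          lintegral_mono fun c => le_max_left _ _
  · have hswap : ∀ b : β, ∫⁻ a, ∫⁻ c, M (c, (a, b)) ∂ν ∂μ
        = ∫⁻ c, ∫⁻ a, M (c, (a, b)) ∂μ ∂ν := fun b =>
      lintegral_lintegral_swap ((hM.comp (measurable_snd.prodMk
        (measurable_fst.prodMk measurable_const))).aemeasurable)
    calc essSup (fun b => ∫⁻ a, ∫⁻ c, M (c, (a, b)) ∂ν ∂μ) kap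
        = essSup (fun b => ∫⁻ c, ∫⁻ a, M (c, (a, b)) ∂μ ∂ν) kap := by
          exact essSup_congr_ae (Filter.Eventually.of_forall hswap)
      _ ≤ ∫⁻ c, essSup (fun b => ∫⁻ a, M (c, (a, b)) ∂μ) kap ∂ν := by
          refine essSup_lintegral_le kap ν (f := fun q : β × γ => ∫⁻ a, M (q.2, (a, q.1)) ∂μ) ?_
          exact Measurable.lintegral_prod_right' (hM.comp
            ((measurable_fst.snd).prodMk (measurable_snd.prodMk (measurable_fst.fst))))
      _ ≤ ∫⁻ c, normA μ kap (fun t => M (c, t)) ∂ν :=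
          lintegral_mono fun c => le_max_right _ _


section SchurProdHelperLemmas

variable {X₁ X₂ Y₁ Y₂ Z₁ Z₂ : Type*} [MeasurableSpace X₁] [MeasurableSpace X₂]
    [MeasurableSpace Y₁] [MeasurableSpace Y₂] [MeasurableSpace Z₁] [MeasurableSpace Z₂]
    {μ₁ : Measure X₁} {μ₂ : Measure X₂} {ν₁ : Measure Y₁} {ν₂ : Measure Y₂}
    {π₁ : Measure Z₁} {π₂ : Measure Z₂}

/-- Measurability of the inner `normA` family. -/
lemma measurable_normA_param (μ₁ : Measure X₁) (ν₁ : Measure Y₁) [SFinite μ₁] [SFinite ν₁]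
    {A : (X₁ × X₂) × (Y₁ × Y₂) → ℝ≥0∞} (hA : Measurable A) :
    Measurable fun s : X₂ × Y₂ => normA μ₁ ν₁ fun t : X₁ × Y₁ => A ((t.1, s.1), (t.2, s.2)) := by
  refine Measurable.max ?_ ?_
  · refine measurable_essSup_param μ₁ (f := fun q : X₁ × (X₂ × Y₂) =>
      ∫⁻ y₁, A ((q.1, q.2.1), (y₁, q.2.2)) ∂ν₁) ?_
    refine Measurable.lintegral_prod_right' (f := fun r : (X₁ × (X₂ × Y₂)) × Y₁ =>
      A ((r.1.1, r.1.2.1), (r.2, r.1.2.2))) ?_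
    exact hA.comp (((measurable_fst.fst).prodMk measurable_fst.snd.fst).prodMk
      (measurable_snd.prodMk measurable_fst.snd.snd))
  · refine measurable_essSup_param ν₁ (f := fun q : Y₁ × (X₂ × Y₂) =>
      ∫⁻ x₁, A ((x₁, q.2.1), (q.1, q.2.2)) ∂μ₁) ?_
    refine Measurable.lintegral_prod_right' (f := fun r : (Y₁ × (X₂ × Y₂)) × X₁ =>
      A ((r.2, r.1.2.1), (r.1.1, r.1.2.2))) ?_
    exact hA.comp ((measurable_snd.prodMk measurable_fst.snd.fst).prodMk
      ((measurable_fst.fst).prodMk measurable_fst.snd.snd))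

set_option maxHeartbeats 1000000 in
lemma normB_schur [SigmaFinite μ₁] [SigmaFinite μ₂] [SigmaFinite ν₁] [SigmaFinite ν₂]
    [SigmaFinite π₁] [SigmaFinite π₂]
    {A : (X₁ × X₂) × (Y₁ × Y₂) → ℝ≥0∞} {B : (Y₁ × Y₂) × (Z₁ × Z₂) → ℝ≥0∞}
    (hA : Measurable A) (hB : Measurable B) :
    normB μ₁ μ₂ π₁ π₂ (fun p => ∫⁻ y, A (p.1, y) * B (y, p.2) ∂(ν₁.prod ν₂)) ≤
      normB μ₁ μ₂ ν₁ ν₂ A * normB ν₁ ν₂ π₁ π₂ B := by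
  set a := fun s : X₂ × Y₂ => normA μ₁ ν₁ fun t : X₁ × Y₁ => A ((t.1, s.1), (t.2, s.2)) with hadef
  set b := fun s : Y₂ × Z₂ => normA ν₁ π₁ fun t : Y₁ × Z₁ => B ((t.1, s.1), (t.2, s.2)) with hbdef
  have ham : Measurable a := measurable_normA_param μ₁ ν₁ hA
  have hbm : Measurable b := measurable_normA_param ν₁ π₁ hB
  have claimC : ∀ s : X₂ × Z₂,
      normA μ₁ π₁ (fun t : X₁ × Z₁ =>
        ∫⁻ y, A ((t.1, s.1), y) * B (y, (t.2, s.2)) ∂(ν₁.prod ν₂)) ≤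
      ∫⁻ y₂, a (s.1, y₂) * b (y₂, s.2) ∂ν₂ := by
    intro s
    have heq : (fun t : X₁ × Z₁ => ∫⁻ y, A ((t.1, s.1), y) * B (y, (t.2, s.2)) ∂(ν₁.prod ν₂))
        = fun t : X₁ × Z₁ => ∫⁻ y₂, (∫⁻ y₁,
            A ((t.1, s.1), (y₁, y₂)) * B ((y₁, y₂), (t.2, s.2)) ∂ν₁) ∂ν₂ := by
      funext t
      refine lintegral_prod_symm' _ ?_
      exact (hA.comp (measurable_const.prodMk measurable_id)).mul
        (hB.comp (measurable_id.prodMk measurable_const))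
    rw [heq]
    have hM : Measurable fun r : Y₂ × (X₁ × Z₁) =>
        ∫⁻ y₁, A ((r.2.1, s.1), (y₁, r.1)) * B ((y₁, r.1), (r.2.2, s.2)) ∂ν₁ := by
      refine Measurable.lintegral_prod_right' (f := fun w : (Y₂ × (X₁ × Z₁)) × Y₁ =>
        A ((w.1.2.1, s.1), (w.2, w.1.1)) * B ((w.2, w.1.1), (w.1.2.2, s.2))) ?_
      refine Measurable.mul ?_ ?_
      · exact hA.comp (((measurable_fst.snd.fst).prodMk measurable_const).prodMk
          (measurable_snd.prodMk measurable_fst.fst))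
      · exact hB.comp ((measurable_snd.prodMk measurable_fst.fst).prodMk
          ((measurable_fst.snd.snd).prodMk measurable_const))
    refine le_trans (normA_lintegral_le (M := fun r : Y₂ × (X₁ × Z₁) =>
        ∫⁻ y₁, A ((r.2.1, s.1), (y₁, r.1)) * B ((y₁, r.1), (r.2.2, s.2)) ∂ν₁) ν₂ μ₁ π₁ hM) ?_
    refine lintegral_mono fun y₂ => ?_
    have := normA_schur μ₁ ν₁ π₁
      (A := fun t : X₁ × Y₁ => A ((t.1, s.1), (t.2, y₂)))
      (B := fun t : Y₁ × Z₁ => B ((t.1, y₂), (t.2, s.2)))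
      (hA.comp ((measurable_fst.prodMk measurable_const).prodMk
        (measurable_snd.prodMk measurable_const)))
      (hB.comp ((measurable_fst.prodMk measurable_const).prodMk
        (measurable_snd.prodMk measurable_const)))
    exact this
  calc normB μ₁ μ₂ π₁ π₂ (fun p => ∫⁻ y, A (p.1, y) * B (y, p.2) ∂(ν₁.prod ν₂))
      ≤ normA μ₂ π₂ (fun s : X₂ × Z₂ => ∫⁻ y₂, a (s.1, y₂) * b (y₂, s.2) ∂ν₂) :=
        normA_mono claimC
    _ ≤ normA μ₂ ν₂ a * normA ν₂ π₂ b := normA_schur μ₂ ν₂ π₂ ham hbm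
    _ = normB μ₁ μ₂ ν₁ ν₂ A * normB ν₁ ν₂ π₁ π₂ B := rfl

lemma normB_mono {f g : (X₁ × X₂) × (Y₁ × Y₂) → ℝ≥0∞} (h : ∀ p, f p ≤ g p) :
    normB μ₁ μ₂ ν₁ ν₂ f ≤ normB μ₁ μ₂ ν₁ ν₂ g :=
  normA_mono fun s => normA_mono fun t => h _

lemma normB_const_mul {c : ℝ≥0∞} (hc : c ≠ ∞) (f : (X₁ × X₂) × (Y₁ × Y₂) → ℝ≥0∞) :
    normB μ₁ μ₂ ν₁ ν₂ (fun p => c * f p) = c * normB μ₁ μ₂ ν₁ ν₂ f := by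
  unfold normB
  simp_rw [normA_const_mul μ₁ ν₁ hc]
  exact normA_const_mul μ₂ ν₂ hc _



lemma normB_lt_top_ae [SigmaFinite μ₁] [SigmaFinite μ₂] [SigmaFinite π₁] [SigmaFinite π₂]
    {P : (X₁ × X₂) × (Z₁ × Z₂) → ℝ≥0∞} (hP : Measurable P)
    (h : normB μ₁ μ₂ π₁ π₂ P < ∞) :
    ∀ᵐ p ∂((μ₁.prod μ₂).prod (π₁.prod π₂)), P p < ∞ := by
  have hPset : MeasurableSet {p : (X₁ × X₂) × (Z₁ × Z₂) | P p < ∞} :=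
    measurableSet_lt hP measurable_const
  set N := fun s : X₂ × Z₂ => normA μ₁ π₁ (fun t : X₁ × Z₁ => P ((t.1, s.1), (t.2, s.2)))
    with hNdef
  have hNm : Measurable N := measurable_normA_param μ₁ π₁ hP
  have h1 : essSup (fun x₂ => ∫⁻ z₂, N (x₂, z₂) ∂π₂) μ₂ < ∞ :=
    (le_max_left _ _).trans_lt h
  have h3 : ∀ᵐ x₂ ∂μ₂, ∀ᵐ z₂ ∂π₂, N (x₂, z₂) < ∞ :=
    (ae_lt_of_essSup_lt h1).mono fun x₂ hx =>
      ae_lt_top (hNm.comp measurable_prodMk_left) hx.ne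
  have h4 : ∀ x₂ z₂, N (x₂, z₂) < ∞ →
      ∀ᵐ x₁ ∂μ₁, ∀ᵐ z₁ ∂π₁, P ((x₁, x₂), (z₁, z₂)) < ∞ := by
    intro x₂ z₂ hN
    have h5 : essSup (fun x₁ => ∫⁻ z₁, P ((x₁, x₂), (z₁, z₂)) ∂π₁) μ₁ < ∞ :=
      (le_max_left _ _).trans_lt hN
    refine (ae_lt_of_essSup_lt h5).mono fun x₁ hx => ae_lt_top ?_ hx.ne
    exact hP.comp ((measurable_const.prodMk measurable_const).prodMk
      (measurable_id.prodMk measurable_const))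
  have h5 : ∀ᵐ x₂ ∂μ₂, ∀ᵐ z₂ ∂π₂, ∀ᵐ x₁ ∂μ₁, ∀ᵐ z₁ ∂π₁, P ((x₁, x₂), (z₁, z₂)) < ∞ :=
    h3.mono fun x₂ hx => hx.mono fun z₂ hz => h4 _ _ hz
  -- Step A: swap z₂ and x₁ (under x₂)
  have h6 : ∀ᵐ x₂ ∂μ₂, ∀ᵐ x₁ ∂μ₁, ∀ᵐ z₂ ∂π₂, ∀ᵐ z₁ ∂π₁, P ((x₁, x₂), (z₁, z₂)) < ∞ := by
    refine h5.mono fun x₂ hx => ?_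
    refine (Measure.ae_ae_comm (p := fun z₂ x₁ => ∀ᵐ z₁ ∂π₁, P ((x₁, x₂), (z₁, z₂)) < ∞) ?_).mp hx
    refine measurableSet_ae_mem π₁ (s := {w : (Z₂ × X₁) × Z₁ |
      P ((w.1.2, x₂), (w.2, w.1.1)) < ∞}) ?_
    exact hPset.preimage (((measurable_fst.snd).prodMk measurable_const).prodMk
      (measurable_snd.prodMk measurable_fst.fst))
  -- Step B: swap x₂ and x₁ (outermost)
  have h7 : ∀ᵐ x₁ ∂μ₁, ∀ᵐ x₂ ∂μ₂, ∀ᵐ z₂ ∂π₂, ∀ᵐ z₁ ∂π₁, P ((x₁, x₂), (z₁, z₂)) < ∞ := by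
    refine (Measure.ae_ae_comm (p := fun x₂ x₁ =>
      ∀ᵐ z₂ ∂π₂, ∀ᵐ z₁ ∂π₁, P ((x₁, x₂), (z₁, z₂)) < ∞) ?_).mp h6
    refine measurableSet_ae_mem π₂ (s := {w : (X₂ × X₁) × Z₂ |
      ∀ᵐ z₁ ∂π₁, P ((w.1.2, w.1.1), (z₁, w.2)) < ∞}) ?_
    refine measurableSet_ae_mem π₁ (s := {w : ((X₂ × X₁) × Z₂) × Z₁ |
      P ((w.1.1.2, w.1.1.1), (w.2, w.1.2)) < ∞}) ?_
    exact hPset.preimage (((measurable_fst.fst.snd).prodMk measurable_fst.fst.fst).prodMk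
      (measurable_snd.prodMk measurable_fst.snd))
  -- Step C: swap z₂ and z₁ (innermost)
  have h8 : ∀ᵐ x₁ ∂μ₁, ∀ᵐ x₂ ∂μ₂, ∀ᵐ z₁ ∂π₁, ∀ᵐ z₂ ∂π₂, P ((x₁, x₂), (z₁, z₂)) < ∞ := by
    refine h7.mono fun x₁ hx => hx.mono fun x₂ hz => ?_
    refine (Measure.ae_ae_comm (p := fun z₂ z₁ => P ((x₁, x₂), (z₁, z₂)) < ∞) ?_).mp hz
    exact hPset.preimage ((measurable_const.prodMk measurable_const).prodMk
      (measurable_snd.prodMk measurable_fst))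
  -- Reassemble
  refine (Measure.ae_prod_iff_ae_ae (p := fun p : (X₁ × X₂) × (Z₁ × Z₂) => P p < ∞)
    hPset).mpr ?_
  refine (Measure.ae_prod_iff_ae_ae (p := fun x : X₁ × X₂ =>
    ∀ᵐ z ∂(π₁.prod π₂), P (x, z) < ∞) ?_).mpr ?_
  · exact measurableSet_ae_mem (π₁.prod π₂) hPset
  · refine h8.mono fun x₁ hx => hx.mono fun x₂ hz => ?_
    refine (Measure.ae_prod_iff_ae_ae (p := fun z : Z₁ × Z₂ =>
      P ((x₁, x₂), z) < ∞) ?_).mpr hz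
    exact hPset.preimage ((measurable_const.prodMk measurable_const).prodMk measurable_id)



end SchurProdHelperLemmas

end SchurHelperLemmas

/-- Products of kernels in the spaces `𝓑`
(Proposition `prop:NewKernelModuleBasicProperties2` (2)). -/
theorem Bm_product
    {X₁ X₂ Y₁ Y₂ Z₁ Z₂ : Type*} [MeasurableSpace X₁] [MeasurableSpace X₂]
    [MeasurableSpace Y₁] [MeasurableSpace Y₂] [MeasurableSpace Z₁] [MeasurableSpace Z₂]
    (μ₁ : Measure X₁) (μ₂ : Measure X₂) (ν₁ : Measure Y₁) (ν₂ : Measure Y₂)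
    (ρ₁ : Measure Z₁) (ρ₂ : Measure Z₂)
    [SigmaFinite μ₁] [SigmaFinite μ₂] [SigmaFinite ν₁] [SigmaFinite ν₂]
    [SigmaFinite ρ₁] [SigmaFinite ρ₂]
    (ω : (X₁ × X₂) × (Y₁ × Y₂) → ℝ) (σ : (Y₁ × Y₂) × (Z₁ × Z₂) → ℝ)
    (τ : (X₁ × X₂) × (Z₁ × Z₂) → ℝ)
    (hω : Measurable ω) (hσ : Measurable σ) (hτ : Measurable τ)
    (hω_pos : ∀ z, 0 < ω z) (hσ_pos : ∀ z, 0 < σ z) (hτ_pos : ∀ z, 0 < τ z)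
    (C : ℝ) (hC : 0 < C)
    (hτle : ∀ (x : X₁ × X₂) (y : Y₁ × Y₂) (z : Z₁ × Z₂),
      τ (x, z) ≤ C * ω (x, y) * σ (y, z))
    (K : (X₁ × X₂) × (Y₁ × Y₂) → ℂ) (L : (Y₁ × Y₂) × (Z₁ × Z₂) → ℂ)
    (hK : Measurable K) (hL : Measurable L)
    (hKB : normBm μ₁ μ₂ ν₁ ν₂ ω K < ∞) (hLB : normBm ν₁ ν₂ ρ₁ ρ₂ σ L < ∞) :
    (∀ᵐ p ∂((μ₁.prod μ₂).prod (ρ₁.prod ρ₂)),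
      Integrable (fun y => K (p.1, y) * L (y, p.2)) (ν₁.prod ν₂)) ∧
    normBm μ₁ μ₂ ρ₁ ρ₂ τ
        (fun p => ∫ y, K (p.1, y) * L (y, p.2) ∂(ν₁.prod ν₂)) < ∞ ∧
    normBm μ₁ μ₂ ρ₁ ρ₂ τ (fun p => ∫ y, K (p.1, y) * L (y, p.2) ∂(ν₁.prod ν₂)) ≤
      ENNReal.ofReal C * normBm μ₁ μ₂ ν₁ ν₂ ω K * normBm ν₁ ν₂ ρ₁ ρ₂ σ L := by
  set A := fun z : (X₁ × X₂) × (Y₁ × Y₂) => ENNReal.ofReal (ω z) * (‖K z‖₊ : ℝ≥0∞) with hAdef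
  set B := fun z : (Y₁ × Y₂) × (Z₁ × Z₂) => ENNReal.ofReal (σ z) * (‖L z‖₊ : ℝ≥0∞) with hBdef
  have hAm : Measurable A := (ENNReal.measurable_ofReal.comp hω).mul hK.enorm
  have hBm : Measurable B := (ENNReal.measurable_ofReal.comp hσ).mul hL.enorm
  set P := fun p : (X₁ × X₂) × (Z₁ × Z₂) => ∫⁻ y, A (p.1, y) * B (y, p.2) ∂(ν₁.prod ν₂)
    with hPdef
  have hPm : Measurable P := by
    refine Measurable.lintegral_prod_right'
      (f := fun q : ((X₁ × X₂) × (Z₁ × Z₂)) × (Y₁ × Y₂) => A (q.1.1, q.2) * B (q.2, q.1.2)) ?_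
    exact (hAm.comp (measurable_fst.fst.prodMk measurable_snd)).mul
      (hBm.comp (measurable_snd.prodMk measurable_fst.snd))
  have hKA : normBm μ₁ μ₂ ν₁ ν₂ ω K = normB μ₁ μ₂ ν₁ ν₂ A := rfl
  have hLB' : normBm ν₁ ν₂ ρ₁ ρ₂ σ L = normB ν₁ ν₂ ρ₁ ρ₂ B := rfl
  have hPB : normB μ₁ μ₂ ρ₁ ρ₂ P ≤ normB μ₁ μ₂ ν₁ ν₂ A * normB ν₁ ν₂ ρ₁ ρ₂ B :=
    normB_schur hAm hBm
  have hPfin : normB μ₁ μ₂ ρ₁ ρ₂ P < ∞ :=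
    hPB.trans_lt (ENNReal.mul_lt_top (hKA ▸ hKB) (hLB' ▸ hLB))
  have haefin := normB_lt_top_ae hPm hPfin
  -- pointwise domination for the weighted product kernel
  have hAB : ∀ (x : X₁ × X₂) (y : Y₁ × Y₂) (z : Z₁ × Z₂),
      A (x, y) * B (y, z) = (ENNReal.ofReal (ω (x, y)) * ENNReal.ofReal (σ (y, z))) *
        ((‖K (x, y)‖₊ : ℝ≥0∞) * (‖L (y, z)‖₊ : ℝ≥0∞)) := by
    intro x y z
    simp only [hAdef, hBdef]
    ring
  have key : ∀ p : (X₁ × X₂) × (Z₁ × Z₂),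
      ENNReal.ofReal (τ p) * (‖∫ y, K (p.1, y) * L (y, p.2) ∂(ν₁.prod ν₂)‖₊ : ℝ≥0∞) ≤
        ENNReal.ofReal C * P p := by
    intro p
    have hpt : ∀ y : Y₁ × Y₂, ENNReal.ofReal (τ p) * (‖K (p.1, y) * L (y, p.2)‖₊ : ℝ≥0∞) ≤
        ENNReal.ofReal C * (A (p.1, y) * B (y, p.2)) := by
      intro y
      have hτ' : ENNReal.ofReal (τ p) ≤ ENNReal.ofReal C *
          (ENNReal.ofReal (ω (p.1, y)) * ENNReal.ofReal (σ (y, p.2))) := by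
        rw [← ENNReal.ofReal_mul (hω_pos _).le, ← ENNReal.ofReal_mul hC.le]
        refine ENNReal.ofReal_le_ofReal ?_
        rw [← mul_assoc]
        exact hτle p.1 y p.2
      calc ENNReal.ofReal (τ p) * (‖K (p.1, y) * L (y, p.2)‖₊ : ℝ≥0∞)
          = ENNReal.ofReal (τ p) * ((‖K (p.1, y)‖₊ : ℝ≥0∞) * (‖L (y, p.2)‖₊ : ℝ≥0∞)) := by
            rw [nnnorm_mul, ENNReal.coe_mul]
        _ ≤ (ENNReal.ofReal C * (ENNReal.ofReal (ω (p.1, y)) * ENNReal.ofReal (σ (y, p.2)))) *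
            ((‖K (p.1, y)‖₊ : ℝ≥0∞) * (‖L (y, p.2)‖₊ : ℝ≥0∞)) := mul_le_mul_left hτ' _
        _ = ENNReal.ofReal C * (A (p.1, y) * B (y, p.2)) := by rw [hAB p.1 y p.2]; ring
    calc ENNReal.ofReal (τ p) * (‖∫ y, K (p.1, y) * L (y, p.2) ∂(ν₁.prod ν₂)‖₊ : ℝ≥0∞)
        ≤ ENNReal.ofReal (τ p) * ∫⁻ y, ‖K (p.1, y) * L (y, p.2)‖₊ ∂(ν₁.prod ν₂) :=
          mul_le_mul_right (enorm_integral_le_lintegral_enorm _) _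
      _ = ∫⁻ y, ENNReal.ofReal (τ p) * ‖K (p.1, y) * L (y, p.2)‖₊ ∂(ν₁.prod ν₂) :=
          (lintegral_const_mul' _ _ ENNReal.ofReal_ne_top).symm
      _ ≤ ∫⁻ y, ENNReal.ofReal C * (A (p.1, y) * B (y, p.2)) ∂(ν₁.prod ν₂) :=
          lintegral_mono hpt
      _ = ENNReal.ofReal C * P p := lintegral_const_mul' _ _ ENNReal.ofReal_ne_top
  have hfinal : normBm μ₁ μ₂ ρ₁ ρ₂ τ (fun p => ∫ y, K (p.1, y) * L (y, p.2) ∂(ν₁.prod ν₂)) ≤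
      ENNReal.ofReal C * normBm μ₁ μ₂ ν₁ ν₂ ω K * normBm ν₁ ν₂ ρ₁ ρ₂ σ L := by
    have h0 : normBm μ₁ μ₂ ρ₁ ρ₂ τ (fun p => ∫ y, K (p.1, y) * L (y, p.2) ∂(ν₁.prod ν₂)) =
        normB μ₁ μ₂ ρ₁ ρ₂ (fun p => ENNReal.ofReal (τ p) *
          (‖∫ y, K (p.1, y) * L (y, p.2) ∂(ν₁.prod ν₂)‖₊ : ℝ≥0∞)) := rfl
    rw [h0, hKA, hLB', mul_assoc]
    refine le_trans (normB_mono key) ?_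
    rw [normB_const_mul ENNReal.ofReal_ne_top]
    exact mul_le_mul_right hPB _
  refine ⟨?_, ?_, ?_⟩
  · -- a.e. integrability
    refine haefin.mono fun p hp => ?_
    have hmKL : Measurable fun y => K (p.1, y) * L (y, p.2) :=
      (hK.comp (measurable_const.prodMk measurable_id)).mul
        (hL.comp (measurable_id.prodMk measurable_const))
    refine ⟨hmKL.aestronglyMeasurable, ?_⟩
    have hbound : ∀ y : Y₁ × Y₂, (‖K (p.1, y) * L (y, p.2)‖₊ : ℝ≥0∞) ≤
        ENNReal.ofReal (C / τ (p.1, p.2)) * (A (p.1, y) * B (y, p.2)) := by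
      intro y
      have hτσ : (1 : ℝ) ≤ C / τ (p.1, p.2) * (ω (p.1, y) * σ (y, p.2)) := by
        rw [div_mul_eq_mul_div, le_div_iff₀ (hτ_pos _)]
        rw [one_mul, ← mul_assoc]
        exact hτle p.1 y p.2
      have h1 : (1 : ℝ≥0∞) ≤ ENNReal.ofReal (C / τ (p.1, p.2)) *
          (ENNReal.ofReal (ω (p.1, y)) * ENNReal.ofReal (σ (y, p.2))) := by
        rw [← ENNReal.ofReal_mul (hω_pos _).le, ← ENNReal.ofReal_mul
          (div_nonneg hC.le (hτ_pos _).le)]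
        exact ENNReal.one_le_ofReal.mpr hτσ
      calc (‖K (p.1, y) * L (y, p.2)‖₊ : ℝ≥0∞)
          = (‖K (p.1, y)‖₊ : ℝ≥0∞) * (‖L (y, p.2)‖₊ : ℝ≥0∞) := by
            rw [nnnorm_mul, ENNReal.coe_mul]
        _ = 1 * ((‖K (p.1, y)‖₊ : ℝ≥0∞) * (‖L (y, p.2)‖₊ : ℝ≥0∞)) := (one_mul _).symm
        _ ≤ (ENNReal.ofReal (C / τ (p.1, p.2)) *
              (ENNReal.ofReal (ω (p.1, y)) * ENNReal.ofReal (σ (y, p.2)))) *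
            ((‖K (p.1, y)‖₊ : ℝ≥0∞) * (‖L (y, p.2)‖₊ : ℝ≥0∞)) := mul_le_mul_left h1 _
        _ = ENNReal.ofReal (C / τ (p.1, p.2)) * (A (p.1, y) * B (y, p.2)) := by
            rw [hAB p.1 y p.2]; ring
    show HasFiniteIntegral _ _
    rw [HasFiniteIntegral]
    calc ∫⁻ y, ‖K (p.1, y) * L (y, p.2)‖₊ ∂(ν₁.prod ν₂)
        ≤ ∫⁻ y, ENNReal.ofReal (C / τ (p.1, p.2)) * (A (p.1, y) * B (y, p.2)) ∂(ν₁.prod ν₂) :=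
          lintegral_mono hbound
      _ = ENNReal.ofReal (C / τ (p.1, p.2)) * P p :=
          lintegral_const_mul' _ _ ENNReal.ofReal_ne_top
      _ < ∞ := ENNReal.mul_lt_top ENNReal.ofReal_lt_top hp
  · -- finiteness
    exact hfinal.trans_lt (ENNReal.mul_lt_top
      (ENNReal.mul_lt_top ENNReal.ofReal_lt_top hKB) hLB)
  · exact hfinal


end
end

section
/- Let (X₁, F₁, μ₁), (X₂, F₂, μ₂), (Y₁, G₁, ν₁), (Y₂, G₂, ν₂) be σ-finite measure spaces, X := X₁ × X₂ with μ := μ₁ ⊗ μ₂, Y := Y₁ × Y₂ with ν := ν₁ ⊗ ν₂. Let m : X × Y → (0,∞), v : X → (0,∞), w : Y → (0,∞) be measurable with m(x,y) ≤ C · v(x) · w(y) for all x ∈ X, y ∈ Y and some constant C > 0. If f ∈ 𝒢_v(μ) and g ∈ 𝒢_w(ν), then the tensor product f ⊗ g : X × Y → ℂ, (x,y) ↦ f(x)·g(y), belongs to 𝓑_m(X,Y) and satisfies ‖f ⊗ g‖_{𝓑_m} ≤ 2C · ‖f‖_{𝒢_v} · ‖g‖_{𝒢_w}. -/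
open MeasureTheory ENNReal Filter

noncomputable section

/-- Swapped iterated essential supremum is bounded by the essential supremum over the
product measure. -/
lemma essSup_essSup_le' {α β : Type*} [MeasurableSpace α] [MeasurableSpace β]
    (μ : Measure α) (ν : Measure β) [SFinite μ] [SFinite ν]
    {F : α × β → ℝ≥0∞} (hF : Measurable F) :
    essSup (fun b => essSup (fun a => F (a, b)) μ) ν ≤ essSup F (μ.prod ν) := by
  set c := essSup F (μ.prod ν) with hc
  have h : ∀ᵐ z ∂(μ.prod ν), F z ≤ c := _root_.ae_le_essSup
  have h2 : ∀ᵐ z ∂(ν.prod μ), F z.swap ≤ c := by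
    rw [← Measure.prod_swap]
    exact (ae_map_iff (p := fun z : β × α => F z.swap ≤ c)
      measurable_swap.aemeasurable
      (measurableSet_le (hF.comp measurable_swap) measurable_const)).2 (by simpa using h)
  have h3 := Measure.ae_ae_of_ae_prod h2
  exact essSup_le_of_ae_le _ (h3.mono fun b hb => essSup_le_of_ae_le _ hb)

/-- `normA` is monotone with respect to pointwise inequality of kernels. -/
lemma normA_mono' {U V : Type*} [MeasurableSpace U] [MeasurableSpace V]
    (lam : Measure U) (kap : Measure V) {K K' : U × V → ℝ≥0∞}
    (h : ∀ z, K z ≤ K' z) : normA lam kap K ≤ normA lam kap K' :=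
  max_le_max
    (essSup_mono_ae (Filter.Eventually.of_forall fun u => lintegral_mono fun v => h (u, v)))
    (essSup_mono_ae (Filter.Eventually.of_forall fun v => lintegral_mono fun u => h (u, v)))

/-- Explicit description of the `Gnorm` in terms of integrals and essential suprema. -/
lemma Gnorm_eq' {α β : Type*} [MeasurableSpace α] [MeasurableSpace β]
    (μ₁ : Measure α) (μ₂ : Measure β) (h : α × β → ℂ) :
    Gnorm μ₁ μ₂ h =
      max (max (∫⁻ z, (‖h z‖₊ : ℝ≥0∞) ∂(μ₁.prod μ₂))
          (essSup (fun z => (‖h z‖₊ : ℝ≥0∞)) (μ₁.prod μ₂)))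
        (max (essSup (fun x₂ => ∫⁻ x₁, (‖h (x₁, x₂)‖₊ : ℝ≥0∞) ∂μ₁) μ₂)
          (∫⁻ x₂, essSup (fun x₁ => (‖h (x₁, x₂)‖₊ : ℝ≥0∞)) μ₁ ∂μ₂)) := by
  unfold Gnorm mixedNorm mixedNormENN lpNormENN
  rw [eLpNorm_one_eq_lintegral_enorm, eLpNorm_exponent_top]
  unfold eLpNormEssSup
  simp [ENNReal.one_ne_top, ENNReal.toReal_one, ENNReal.rpow_one, enorm_eq_nnnorm]

/-- Tensor products of functions in the weighted spaces `𝒢_v`, `𝒢_w` belong to `𝓑_m`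
(Lemma `lem:KernelModuleRichnessResult`). -/
theorem tensor_mem_Bm
    {X₁ X₂ Y₁ Y₂ : Type*} [MeasurableSpace X₁] [MeasurableSpace X₂]
    [MeasurableSpace Y₁] [MeasurableSpace Y₂]
    (μ₁ : Measure X₁) (μ₂ : Measure X₂) (ν₁ : Measure Y₁) (ν₂ : Measure Y₂)
    [SigmaFinite μ₁] [SigmaFinite μ₂] [SigmaFinite ν₁] [SigmaFinite ν₂]
    (m : (X₁ × X₂) × (Y₁ × Y₂) → ℝ) (hm : Measurable m) (hm_pos : ∀ z, 0 < m z)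
    (v : X₁ × X₂ → ℝ) (w : Y₁ × Y₂ → ℝ) (hv : Measurable v) (hw : Measurable w)
    (hv_pos : ∀ x, 0 < v x) (hw_pos : ∀ y, 0 < w y)
    (C : ℝ) (hC : 0 < C)
    (hm_le : ∀ (x : X₁ × X₂) (y : Y₁ × Y₂), m (x, y) ≤ C * v x * w y)
    (f : X₁ × X₂ → ℂ) (g : Y₁ × Y₂ → ℂ) (hf : Measurable f) (hg : Measurable g)
    (hfG : Gnorm μ₁ μ₂ (fun x => (v x : ℂ) * f x) < ∞)
    (hgG : Gnorm ν₁ ν₂ (fun y => (w y : ℂ) * g y) < ∞) :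
    normBm μ₁ μ₂ ν₁ ν₂ m (fun z => f z.1 * g z.2) < ∞ ∧
    normBm μ₁ μ₂ ν₁ ν₂ m (fun z => f z.1 * g z.2) ≤
      2 * ENNReal.ofReal C * Gnorm μ₁ μ₂ (fun x => (v x : ℂ) * f x) *
        Gnorm ν₁ ν₂ (fun y => (w y : ℂ) * g y) := by
  set c := ENNReal.ofReal C with hc
  have hc_ne : c ≠ ∞ := ENNReal.ofReal_ne_top
  set Fc : X₁ × X₂ → ℂ := fun x => (v x : ℂ) * f x with hFcdef
  set Gc : Y₁ × Y₂ → ℂ := fun y => (w y : ℂ) * g y with hGcdef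
  have hFcm : Measurable Fc := (Complex.measurable_ofReal.comp hv).mul hf
  have hGcm : Measurable Gc := (Complex.measurable_ofReal.comp hw).mul hg
  set F : X₁ × X₂ → ℝ≥0∞ := fun x => (‖Fc x‖₊ : ℝ≥0∞) with hFdef
  set G : Y₁ × Y₂ → ℝ≥0∞ := fun y => (‖Gc y‖₊ : ℝ≥0∞) with hGdef
  have hFm : Measurable F := hFcm.enorm
  have hGm : Measurable G := hGcm.enorm
  set GF := Gnorm μ₁ μ₂ Fc with hGF
  set GG := Gnorm ν₁ ν₂ Gc with hGG
  -- components
  set AF : X₂ → ℝ≥0∞ := fun x₂ => essSup (fun x₁ => F (x₁, x₂)) μ₁ with hAF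
  set aF : X₂ → ℝ≥0∞ := fun x₂ => ∫⁻ x₁, F (x₁, x₂) ∂μ₁ with haF
  set BG : Y₂ → ℝ≥0∞ := fun y₂ => ∫⁻ y₁, G (y₁, y₂) ∂ν₁ with hBG
  set bG : Y₂ → ℝ≥0∞ := fun y₂ => essSup (fun y₁ => G (y₁, y₂)) ν₁ with hbG
  have haFm : Measurable aF :=
    Measurable.lintegral_prod_left (f := fun x₁ x₂ => F (x₁, x₂)) hFm
  have hBGm : Measurable BG :=
    Measurable.lintegral_prod_left (f := fun y₁ y₂ => G (y₁, y₂)) hGm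
  have hGFeq := Gnorm_eq' μ₁ μ₂ Fc
  have hGGeq := Gnorm_eq' ν₁ ν₂ Gc
  -- the four component bounds
  have heF1 : (∫⁻ z, F z ∂(μ₁.prod μ₂)) ≤ GF := by
    rw [hGF, hGFeq]; exact le_max_of_le_left (le_max_left _ _)
  have heF2 : essSup F (μ₁.prod μ₂) ≤ GF := by
    rw [hGF, hGFeq]; exact le_max_of_le_left (le_max_right _ _)
  have heF3 : essSup aF μ₂ ≤ GF := by
    rw [hGF, hGFeq]; exact le_max_of_le_right (le_max_left _ _)
  have heF4 : (∫⁻ x₂, AF x₂ ∂μ₂) ≤ GF := by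
    rw [hGF, hGFeq]; exact le_max_of_le_right (le_max_right _ _)
  have heG1 : (∫⁻ z, G z ∂(ν₁.prod ν₂)) ≤ GG := by
    rw [hGG, hGGeq]; exact le_max_of_le_left (le_max_left _ _)
  have heG2 : essSup G (ν₁.prod ν₂) ≤ GG := by
    rw [hGG, hGGeq]; exact le_max_of_le_left (le_max_right _ _)
  have heG3 : essSup BG ν₂ ≤ GG := by
    rw [hGG, hGGeq]; exact le_max_of_le_right (le_max_left _ _)
  have heG4 : (∫⁻ y₂, bG y₂ ∂ν₂) ≤ GG := by
    rw [hGG, hGGeq]; exact le_max_of_le_right (le_max_right _ _)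
  -- pointwise bound on the weighted kernel
  have hnn : ∀ (r : ℝ) (z : ℂ), 0 ≤ r → (‖(r : ℂ) * z‖₊ : ℝ≥0∞) = ENNReal.ofReal r * ‖z‖₊ := by
    intro r z hr
    rw [nnnorm_mul, ENNReal.coe_mul, Complex.nnnorm_real]
    congr 1
    exact Real.enorm_eq_ofReal hr
  have hpt : ∀ (x : X₁ × X₂) (y : Y₁ × Y₂),
      ENNReal.ofReal (m (x, y)) * (‖f x * g y‖₊ : ℝ≥0∞) ≤ c * (F x * G y) := by
    intro x y
    have h1 : F x = ENNReal.ofReal (v x) * ‖f x‖₊ := hnn _ _ (hv_pos x).le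
    have h2 : G y = ENNReal.ofReal (w y) * ‖g y‖₊ := hnn _ _ (hw_pos y).le
    calc ENNReal.ofReal (m (x, y)) * (‖f x * g y‖₊ : ℝ≥0∞)
        ≤ ENNReal.ofReal (C * v x * w y) * ((‖f x‖₊ : ℝ≥0∞) * ‖g y‖₊) := by
          rw [nnnorm_mul, ENNReal.coe_mul]
          exact mul_le_mul_left (ENNReal.ofReal_le_ofReal (hm_le x y)) _
      _ = c * (F x * G y) := by
          rw [ENNReal.ofReal_mul (mul_nonneg hC.le (hv_pos x).le), ENNReal.ofReal_mul hC.le, h1, h2, ← hc]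
          ring
  -- the inner Schur bound
  have hinner : ∀ s : X₂ × Y₂,
      normA μ₁ ν₁ (fun t => c * (F (t.1, s.1) * G (t.2, s.2))) ≤
        AF s.1 * (c * BG s.2) + aF s.1 * (c * bG s.2) := by
    intro s
    refine max_le ?_ ?_
    · refine le_trans ?_ le_self_add
      refine essSup_le_of_ae_le _ ?_
      filter_upwards [_root_.ae_le_essSup (f := fun x₁ => F (x₁, s.1)) (μ := μ₁)] with x₁ hx
      have heq : ∫⁻ y₁, c * (F (x₁, s.1) * G (y₁, s.2)) ∂ν₁
          = (c * F (x₁, s.1)) * BG s.2 := by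
        simp_rw [← mul_assoc]
        exact lintegral_const_mul _ (hGm.comp measurable_prodMk_right)
      rw [heq]
      calc (c * F (x₁, s.1)) * BG s.2 ≤ (c * AF s.1) * BG s.2 := by
            gcongr
        _ = AF s.1 * (c * BG s.2) := by ring
    · refine le_trans ?_ le_add_self
      refine essSup_le_of_ae_le _ ?_
      filter_upwards [_root_.ae_le_essSup (f := fun y₁ => G (y₁, s.2)) (μ := ν₁)] with y₁ hy
      have heq : ∫⁻ x₁, c * (F (x₁, s.1) * G (y₁, s.2)) ∂μ₁
          = (c * G (y₁, s.2)) * aF s.1 := by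
        have : ∀ x₁, c * (F (x₁, s.1) * G (y₁, s.2))
            = (c * G (y₁, s.2)) * F (x₁, s.1) := fun _ => by ring
        simp_rw [this]
        exact lintegral_const_mul _ (hFm.comp measurable_prodMk_right)
      rw [heq]
      calc (c * G (y₁, s.2)) * aF s.1 ≤ (c * bG s.2) * aF s.1 := by
            gcongr
        _ = aF s.1 * (c * bG s.2) := by ring
  -- finiteness of key components
  have hGF_lt : GF < ∞ := hfG
  have hGG_lt : GG < ∞ := hgG
  have heF2_lt : essSup F (μ₁.prod μ₂) < ∞ := lt_of_le_of_lt heF2 hGF_lt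
  have heF3_lt : essSup aF μ₂ < ∞ := lt_of_le_of_lt heF3 hGF_lt
  have heG2_lt : essSup G (ν₁.prod ν₂) < ∞ := lt_of_le_of_lt heG2 hGG_lt
  have heG3_lt : essSup BG ν₂ < ∞ := lt_of_le_of_lt heG3 hGG_lt
  -- outer bound, first term
  have hIB : (∫⁻ y₂, BG y₂ ∂ν₂) = ∫⁻ z, G z ∂(ν₁.prod ν₂) :=
    (lintegral_prod_symm' G hGm).symm
  have hIa : (∫⁻ x₂, aF x₂ ∂μ₂) = ∫⁻ z, F z ∂(μ₁.prod μ₂) :=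
    (lintegral_prod_symm' F hFm).symm
  have hE1 : essSup (fun x₂ => ∫⁻ y₂,
      (AF x₂ * (c * BG y₂) + aF x₂ * (c * bG y₂)) ∂ν₂) μ₂ ≤
      GF * (c * GG) + GF * (c * GG) := by
    refine essSup_le_of_ae_le _ ?_
    filter_upwards [_root_.ae_le_essSup (f := AF) (μ := μ₂), _root_.ae_le_essSup (f := aF) (μ := μ₂)]
      with x₂ hA ha
    have hA' : AF x₂ ≤ GF := hA.trans ((essSup_essSup_le' μ₁ μ₂ hFm).trans heF2)
    have ha' : aF x₂ ≤ GF := ha.trans heF3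
    have hAne : AF x₂ ≠ ∞ := (hA.trans_lt
      (lt_of_le_of_lt (essSup_essSup_le' μ₁ μ₂ hFm) heF2_lt)).ne
    have hane : aF x₂ ≠ ∞ := (ha.trans_lt heF3_lt).ne
    have hsplit : ∫⁻ y₂, (AF x₂ * (c * BG y₂) + aF x₂ * (c * bG y₂)) ∂ν₂
        = AF x₂ * (c * ∫⁻ y₂, BG y₂ ∂ν₂) + aF x₂ * (c * ∫⁻ y₂, bG y₂ ∂ν₂) := by
      rw [lintegral_add_left (f := fun y₂ => AF x₂ * (c * BG y₂)) ((hBGm.const_mul c).const_mul _) ,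
        lintegral_const_mul' _ _ hAne, lintegral_const_mul' _ _ hane,
        lintegral_const_mul _ hBGm, lintegral_const_mul' _ _ hc_ne]
    rw [hsplit]
    have h1 : AF x₂ * (c * ∫⁻ y₂, BG y₂ ∂ν₂) ≤ GF * (c * GG) := by
      refine mul_le_mul' hA' (mul_le_mul_right ?_ _)
      rw [hIB]; exact heG1
    have h2 : aF x₂ * (c * ∫⁻ y₂, bG y₂ ∂ν₂) ≤ GF * (c * GG) :=
      mul_le_mul' ha' (mul_le_mul_right heG4 _)
    exact add_le_add h1 h2
  -- outer bound, second term
  have hE2 : essSup (fun y₂ => ∫⁻ x₂,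
      (AF x₂ * (c * BG y₂) + aF x₂ * (c * bG y₂)) ∂μ₂) ν₂ ≤
      GF * (c * GG) + GF * (c * GG) := by
    refine essSup_le_of_ae_le _ ?_
    filter_upwards [_root_.ae_le_essSup (f := BG) (μ := ν₂), _root_.ae_le_essSup (f := bG) (μ := ν₂)]
      with y₂ hB hb
    have hB' : BG y₂ ≤ GG := hB.trans heG3
    have hb' : bG y₂ ≤ GG := hb.trans ((essSup_essSup_le' ν₁ ν₂ hGm).trans heG2)
    have hBne : c * BG y₂ ≠ ∞ :=
      ENNReal.mul_ne_top hc_ne (hB.trans_lt heG3_lt).ne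
    have hbne : c * bG y₂ ≠ ∞ :=
      ENNReal.mul_ne_top hc_ne (hb.trans_lt
        (lt_of_le_of_lt (essSup_essSup_le' ν₁ ν₂ hGm) heG2_lt)).ne
    have hsplit : ∫⁻ x₂, (AF x₂ * (c * BG y₂) + aF x₂ * (c * bG y₂)) ∂μ₂
        = (∫⁻ x₂, AF x₂ ∂μ₂) * (c * BG y₂) + (∫⁻ x₂, aF x₂ ∂μ₂) * (c * bG y₂) := by
      rw [lintegral_add_right _ (haFm.mul_const _),
        lintegral_mul_const' _ _ hBne, lintegral_mul_const' _ _ hbne]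
    rw [hsplit]
    have h1 : (∫⁻ x₂, AF x₂ ∂μ₂) * (c * BG y₂) ≤ GF * (c * GG) :=
      mul_le_mul' heF4 (mul_le_mul_right hB' _)
    have h2 : (∫⁻ x₂, aF x₂ ∂μ₂) * (c * bG y₂) ≤ GF * (c * GG) := by
      refine mul_le_mul' ?_ (mul_le_mul_right hb' _)
      rw [hIa]; exact heF1
    exact add_le_add h1 h2
  -- assemble
  have key : normBm μ₁ μ₂ ν₁ ν₂ m (fun z => f z.1 * g z.2) ≤ 2 * c * GF * GG := by
    calc normBm μ₁ μ₂ ν₁ ν₂ m (fun z => f z.1 * g z.2)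
        = normA μ₂ ν₂ (fun s => normA μ₁ ν₁ (fun t =>
            ENNReal.ofReal (m ((t.1, s.1), (t.2, s.2)))
              * (‖f (t.1, s.1) * g (t.2, s.2)‖₊ : ℝ≥0∞))) := rfl
      _ ≤ normA μ₂ ν₂ (fun s => normA μ₁ ν₁ (fun t =>
            c * (F (t.1, s.1) * G (t.2, s.2)))) :=
          normA_mono' _ _ fun s => normA_mono' _ _ fun t => hpt _ _
      _ ≤ normA μ₂ ν₂ (fun s => AF s.1 * (c * BG s.2) + aF s.1 * (c * bG s.2)) :=
          normA_mono' _ _ hinner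
      _ ≤ GF * (c * GG) + GF * (c * GG) := max_le hE1 hE2
      _ = 2 * c * GF * GG := by ring
  refine ⟨lt_of_le_of_lt key ?_, le_trans key (le_of_eq rfl)⟩
  refine ENNReal.mul_lt_top (ENNReal.mul_lt_top (ENNReal.mul_lt_top ?_ ?_) hGF_lt) hGG_lt
  · exact ENNReal.ofNat_lt_top
  · exact ENNReal.ofReal_lt_top


end
end

section
/- Let (X, F, μ) = (X₁ × X₂, F₁ ⊗ F₂, μ₁ ⊗ μ₂), where (X₁, μ₁) and (X₂, μ₂) are σ-finite measure spaces. Let A be a solid function space on X with A ≠ {0}, and let v : X → (0,∞) be measurable. Then there exists a measurable set E ⊆ X with μ(E) > 0 such that the indicator function 1_E belongs to A ∩ 𝒢_v(μ) ∩ 𝒢(μ). -/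
open MeasureTheory ENNReal Filter

noncomputable section

lemma lpNormENN_mono {α : Type*} [MeasurableSpace α] (μ : Measure α) (p : ℝ≥0∞)
    {f g : α → ℝ≥0∞} (h : ∀ x, f x ≤ g x) : lpNormENN μ p f ≤ lpNormENN μ p g := by
  unfold lpNormENN
  split
  · exact essSup_mono_ae (Filter.Eventually.of_forall h)
  · exact ENNReal.rpow_le_rpow
      (lintegral_mono fun x => ENNReal.rpow_le_rpow (h x) ENNReal.toReal_nonneg)
      (by positivity)

lemma lpNormENN_one {α : Type*} [MeasurableSpace α] (μ : Measure α) (f : α → ℝ≥0∞) :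
    lpNormENN μ 1 f = ∫⁻ a, f a ∂μ := by
  simp [lpNormENN]

lemma lpNormENN_top {α : Type*} [MeasurableSpace α] (μ : Measure α) (f : α → ℝ≥0∞) :
    lpNormENN μ ∞ f = essSup f μ := by
  simp [lpNormENN]

lemma Gnorm_mono {α β : Type*} [MeasurableSpace α] [MeasurableSpace β]
    (μ₁ : Measure α) (μ₂ : Measure β) {f g : α × β → ℂ}
    (h : ∀ x, ‖f x‖ ≤ ‖g x‖) : Gnorm μ₁ μ₂ f ≤ Gnorm μ₁ μ₂ g := by
  have hnn : ∀ x, (‖f x‖₊ : ℝ≥0∞) ≤ (‖g x‖₊ : ℝ≥0∞) := fun x => by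
    exact_mod_cast h x
  have hmix : ∀ p q : ℝ≥0∞, mixedNorm μ₁ μ₂ p q f ≤ mixedNorm μ₁ μ₂ p q g := by
    intro p q
    refine lpNormENN_mono _ _ fun x₂ => lpNormENN_mono _ _ fun x₁ => hnn (x₁, x₂)
  exact max_le_max (max_le_max (eLpNorm_mono h) (eLpNorm_mono h))
    (max_le_max (hmix 1 ∞) (hmix ∞ 1))

lemma Gnorm_indicator_prod_lt_top {α β : Type*} [MeasurableSpace α] [MeasurableSpace β]
    (μ₁ : Measure α) (μ₂ : Measure β) [SFinite μ₂] (c : ℂ) {s : Set α} {t : Set β}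
    (hs : MeasurableSet s) (ht : MeasurableSet t)
    (hsf : μ₁ s < ∞) (htf : μ₂ t < ∞) :
    Gnorm μ₁ μ₂ ((s ×ˢ t).indicator fun _ => c) < ∞ := by
  set f : α × β → ℂ := (s ×ˢ t).indicator fun _ => c with hf
  have hnn : ∀ x : α × β, (‖f x‖₊ : ℝ≥0∞)
      = (s ×ˢ t).indicator (fun _ => (‖c‖₊ : ℝ≥0∞)) x := by
    intro x
    by_cases hx : x ∈ s ×ˢ t <;> simp [hf, hx]
  have h1 : eLpNorm f 1 (μ₁.prod μ₂) < ∞ := by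
    rw [eLpNorm_one_eq_lintegral_enorm]
    calc ∫⁻ x, (‖f x‖₊ : ℝ≥0∞) ∂(μ₁.prod μ₂)
        = ∫⁻ x, (s ×ˢ t).indicator (fun _ => (‖c‖₊ : ℝ≥0∞)) x ∂(μ₁.prod μ₂) := by
          simp_rw [hnn]
      _ = (‖c‖₊ : ℝ≥0∞) * (μ₁.prod μ₂) (s ×ˢ t) := lintegral_indicator_const (hs.prod ht) _
      _ < ∞ := by
          rw [Measure.prod_prod]
          exact ENNReal.mul_lt_top ENNReal.coe_lt_top (ENNReal.mul_lt_top hsf htf)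
  have htop : eLpNorm f ∞ (μ₁.prod μ₂) < ∞ := by
    rw [eLpNorm_exponent_top]
    refine lt_of_le_of_lt (essSup_le_of_ae_le (‖c‖₊ : ℝ≥0∞)
      (Filter.Eventually.of_forall fun x => ?_)) ENNReal.coe_lt_top
    show (‖f x‖₊ : ℝ≥0∞) ≤ (‖c‖₊ : ℝ≥0∞)
    rw [hnn x]
    exact Set.indicator_le_self' (fun _ _ => (zero_le : (0 : ℝ≥0∞) ≤ _)) x
  have hmix1 : mixedNorm μ₁ μ₂ 1 ∞ f < ∞ := by
    unfold mixedNorm mixedNormENN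
    rw [lpNormENN_top]
    refine lt_of_le_of_lt (essSup_le_of_ae_le ((‖c‖₊ : ℝ≥0∞) * μ₁ s)
      (Filter.Eventually.of_forall fun x₂ => ?_))
      (ENNReal.mul_lt_top ENNReal.coe_lt_top hsf)
    simp only [lpNormENN_one]
    calc ∫⁻ x₁, (‖f (x₁, x₂)‖₊ : ℝ≥0∞) ∂μ₁
        ≤ ∫⁻ x₁, s.indicator (fun _ => (‖c‖₊ : ℝ≥0∞)) x₁ ∂μ₁ := by
          refine lintegral_mono fun x₁ => ?_
          simp only [hnn]
          by_cases hx : (x₁, x₂) ∈ s ×ˢ t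
          · simp [hx, hx.1]
          · simp [hx]
      _ = (‖c‖₊ : ℝ≥0∞) * μ₁ s := lintegral_indicator_const hs _
  have hmix2 : mixedNorm μ₁ μ₂ ∞ 1 f < ∞ := by
    unfold mixedNorm mixedNormENN
    rw [lpNormENN_one]
    calc ∫⁻ x₂, lpNormENN μ₁ ∞ (fun x₁ => (‖f (x₁, x₂)‖₊ : ℝ≥0∞)) ∂μ₂
        ≤ ∫⁻ x₂, t.indicator (fun _ => (‖c‖₊ : ℝ≥0∞)) x₂ ∂μ₂ := by
          refine lintegral_mono fun x₂ => ?_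
          simp only [lpNormENN_top]
          refine essSup_le_of_ae_le _ (Filter.Eventually.of_forall fun x₁ => ?_)
          simp only [hnn]
          by_cases hx : (x₁, x₂) ∈ s ×ˢ t
          · simp [hx, hx.2]
          · simp [hx]
      _ = (‖c‖₊ : ℝ≥0∞) * μ₂ t := lintegral_indicator_const ht _
      _ < ∞ := ENNReal.mul_lt_top ENNReal.coe_lt_top htf
  exact max_lt (max_lt h1 htop) (max_lt hmix1 hmix2)

/-- A solid (normed) function space on a measure space: a normed vector space of
(equivalence classes of a.e.-equal) measurable complex-valued functions such that
membership and norm only depend on the a.e.-magnitude of the function. -/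
structure SolidFunctionSpace (α : Type*) [MeasurableSpace α] (μ : Measure α) where
  Mem : (α → ℂ) → Prop
  norm : (α → ℂ) → ℝ
  mem_measurable : ∀ f, Mem f → Measurable f
  mem_congr : ∀ f g, Mem f → Measurable g → f =ᵐ[μ] g → Mem g
  norm_congr : ∀ f g, Mem f → Mem g → f =ᵐ[μ] g → norm f = norm g
  zero_mem : Mem 0
  add_mem : ∀ f g, Mem f → Mem g → Mem (f + g)
  smul_mem : ∀ (c : ℂ) (f), Mem f → Mem (c • f)
  norm_nonneg' : ∀ f, Mem f → 0 ≤ norm f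
  norm_eq_zero_iff : ∀ f, Mem f → (norm f = 0 ↔ f =ᵐ[μ] 0)
  norm_add_le : ∀ f g, Mem f → Mem g → norm (f + g) ≤ norm f + norm g
  norm_smul' : ∀ (c : ℂ) (f), Mem f → norm (c • f) = ‖c‖ * norm f
  solid : ∀ f g, Mem f → Measurable g → (∀ᵐ x ∂μ, ‖g x‖ ≤ ‖f x‖) →
    Mem g ∧ norm g ≤ norm f

/-- A non-trivial solid function space contains an indicator function of a set of positive
measure lying in `𝒢 ∩ 𝒢_v` (Lemma `lem:SolidSpacesContainGoodFunctions`). -/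
theorem solid_space_contains_good_indicator
    {X₁ X₂ : Type*} [MeasurableSpace X₁] [MeasurableSpace X₂]
    (μ₁ : Measure X₁) (μ₂ : Measure X₂) [SigmaFinite μ₁] [SigmaFinite μ₂]
    (A : SolidFunctionSpace (X₁ × X₂) (μ₁.prod μ₂))
    (hA_ne : ∃ f, A.Mem f ∧ ¬ f =ᵐ[μ₁.prod μ₂] 0)
    (v : X₁ × X₂ → ℝ) (hv : Measurable v) (hv_pos : ∀ x, 0 < v x) :
    ∃ E : Set (X₁ × X₂), MeasurableSet E ∧ 0 < (μ₁.prod μ₂) E ∧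
      A.Mem (E.indicator fun _ => (1 : ℂ)) ∧
      Gnorm μ₁ μ₂ (fun x => (v x : ℂ) * E.indicator (fun _ => (1 : ℂ)) x) < ∞ ∧
      Gnorm μ₁ μ₂ (E.indicator fun _ => (1 : ℂ)) < ∞ := by
  obtain ⟨f, hfA, hfne⟩ := hA_ne
  have hfm : Measurable f := A.mem_measurable f hfA
  set T : ℕ → Set (X₁ × X₂) := fun n =>
    ((spanningSets μ₁ n ×ˢ spanningSets μ₂ n) ∩ {x | (1 : ℝ) / (n + 1) ≤ ‖f x‖})
      ∩ {x | v x ≤ n} with hT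
  have hTmeas : ∀ n, MeasurableSet (T n) := by
    intro n
    refine (((measurableSet_spanningSets μ₁ n).prod
      (measurableSet_spanningSets μ₂ n)).inter ?_).inter ?_
    · exact measurableSet_le measurable_const hfm.norm
    · exact measurableSet_le hv measurable_const
  have hsub : {x | f x ≠ 0} ⊆ ⋃ n, T n := by
    intro x hx
    have hfx : (0 : ℝ) < ‖f x‖ := by simpa using hx
    set n : ℕ := max (max (spanningSetsIndex μ₁ x.1) (spanningSetsIndex μ₂ x.2))
      (max ⌈1 / ‖f x‖⌉₊ ⌈v x⌉₊) with hn
    refine Set.mem_iUnion.2 ⟨n, ⟨⟨?_, ?_⟩, ?_⟩⟩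
    · exact ⟨mem_spanningSets_of_index_le μ₁ x.1 (le_trans (le_max_left _ _) (le_max_left _ _)),
        mem_spanningSets_of_index_le μ₂ x.2 (le_trans (le_max_right _ _) (le_max_left _ _))⟩
    · have h1 : (1 : ℝ) / ‖f x‖ ≤ n + 1 := by
        calc (1 : ℝ) / ‖f x‖ ≤ ⌈1 / ‖f x‖⌉₊ := Nat.le_ceil _
          _ ≤ n := by exact_mod_cast le_trans (le_max_left _ _) (le_max_right _ _)
          _ ≤ n + 1 := by linarith
      have hn1 : (0 : ℝ) < (n : ℝ) + 1 := by positivity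
      show (1 : ℝ) / (n + 1) ≤ ‖f x‖
      rw [div_le_iff₀ hn1]
      rw [div_le_iff₀ hfx] at h1
      linarith
    · show v x ≤ n
      calc v x ≤ ⌈v x⌉₊ := Nat.le_ceil _
        _ ≤ n := by exact_mod_cast le_trans (le_max_right _ _) (le_max_right _ _)
  have hpos : ∃ n, (μ₁.prod μ₂) (T n) ≠ 0 := by
    by_contra h
    push_neg at h
    have h0 : (μ₁.prod μ₂) (⋃ n, T n) = 0 := measure_iUnion_null h
    have h1 : (μ₁.prod μ₂) {x | f x ≠ 0} = 0 := measure_mono_null hsub h0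
    exact hfne (by simpa [Filter.EventuallyEq, ae_iff] using h1)
  obtain ⟨n, hn0⟩ := hpos
  refine ⟨T n, hTmeas n, pos_iff_ne_zero.2 hn0, ?_, ?_, ?_⟩
  · -- membership in A
    have hsm := A.smul_mem (((n : ℝ) + 1 : ℝ) : ℂ) f hfA
    have hind : Measurable ((T n).indicator fun _ => (1 : ℂ)) :=
      measurable_const.indicator (hTmeas n)
    refine (A.solid _ _ hsm hind ?_).1
    refine Filter.Eventually.of_forall fun x => ?_
    by_cases hx : x ∈ T n
    · have hfx : (1 : ℝ) / (n + 1) ≤ ‖f x‖ := hx.1.2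
      have hn1 : (0 : ℝ) < (n : ℝ) + 1 := by positivity
      simp only [Set.indicator_of_mem hx, Pi.smul_apply, norm_smul, norm_one]
      rw [div_le_iff₀ hn1] at hfx
      calc (1 : ℝ) ≤ ‖f x‖ * ((n : ℝ) + 1) := hfx
        _ = ‖(((n : ℝ) + 1 : ℝ) : ℂ)‖ * ‖f x‖ := by
          rw [Complex.norm_real, Real.norm_eq_abs, abs_of_pos hn1]; ring
    · simp only [Set.indicator_of_notMem hx, norm_zero, Pi.smul_apply, norm_smul]
      positivity
  · -- weighted Gnorm finite
    have hsubE : T n ⊆ spanningSets μ₁ n ×ˢ spanningSets μ₂ n := fun x hx => hx.1.1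
    refine lt_of_le_of_lt (Gnorm_mono μ₁ μ₂ (g :=
      (spanningSets μ₁ n ×ˢ spanningSets μ₂ n).indicator fun _ => ((n : ℝ) : ℂ)) ?_) ?_
    · intro x
      by_cases hx : x ∈ T n
      · have hvx : v x ≤ n := hx.2
        have hvp : 0 < v x := hv_pos x
        simp only [Set.indicator_of_mem hx, Set.indicator_of_mem (hsubE hx), mul_one,
          Complex.norm_real, Real.norm_eq_abs]
        rw [abs_of_pos hvp, abs_of_nonneg (le_trans hvp.le hvx)]
        exact hvx
      · simp [Set.indicator_of_notMem hx]
    · exact Gnorm_indicator_prod_lt_top μ₁ μ₂ _ (measurableSet_spanningSets μ₁ n)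
        (measurableSet_spanningSets μ₂ n) (measure_spanningSets_lt_top μ₁ n)
        (measure_spanningSets_lt_top μ₂ n)
  · -- Gnorm finite
    have hsubE : T n ⊆ spanningSets μ₁ n ×ˢ spanningSets μ₂ n := fun x hx => hx.1.1
    refine lt_of_le_of_lt (Gnorm_mono μ₁ μ₂ (g :=
      (spanningSets μ₁ n ×ˢ spanningSets μ₂ n).indicator fun _ => (1 : ℂ)) ?_) ?_
    · intro x
      by_cases hx : x ∈ T n
      · simp [Set.indicator_of_mem hx, Set.indicator_of_mem (hsubE hx)]
      · simp [Set.indicator_of_notMem hx]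
    · exact Gnorm_indicator_prod_lt_top μ₁ μ₂ _ (measurableSet_spanningSets μ₁ n)
        (measurableSet_spanningSets μ₂ n) (measure_spanningSets_lt_top μ₁ n)
        (measure_spanningSets_lt_top μ₂ n)


end
end

section
/- Let (X₁, F₁, μ₁), (X₂, F₂, μ₂), (Y₁, G₁, ν₁), (Y₂, G₂, ν₂) be σ-finite measure spaces, X := X₁ × X₂ with μ := μ₁ ⊗ μ₂, Y := Y₁ × Y₂ with ν := ν₁ ⊗ ν₂. Let m : X × Y → (0,∞) be measurable, let A be a solid Banach function space on Y and B a solid Banach function space on X, and let v : X → (0,∞), w : Y → (0,∞) be measurable with m(x,y) ≤ C · v(x) · w(y) for all (x,y) ∈ X × Y and some C > 0. If A ≠ {0} and every K ∈ 𝓑_m(X,Y) induces a well-defined operator Φ_K : A → B (i.e., for every f ∈ A the integral defining Φ_K f converges absolutely μ-a.e. and Φ_K f ∈ B), then 𝒢_v(μ) := (L¹(μ) ∩ L^∞(μ) ∩ L^{1,∞}(μ) ∩ L^{∞,1}(μ))_v embeds continuously into B: 𝒢_v(μ) ⊆ B and there is C' > 0 with ‖f‖_B ≤ C' ‖f‖_{𝒢_v(μ)}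 for all f ∈ 𝒢_v(μ). -/
open MeasureTheory ENNReal Filter

noncomputable section

/-- A solid Banach function space on a measure space: a complete normed vector space of
(equivalence classes of a.e.-equal) measurable complex-valued functions such that
membership and norm only depend on the a.e.-magnitude of the function. -/
structure SolidBanachFunctionSpace (α : Type*) [MeasurableSpace α] (μ : Measure α) where
  Mem : (α → ℂ) → Prop
  norm : (α → ℂ) → ℝ
  mem_measurable : ∀ f, Mem f → Measurable f
  mem_congr : ∀ f g, Mem f → Measurable g → f =ᵐ[μ] g → Mem g
  norm_congr : ∀ f g, Mem f → Mem g → f =ᵐ[μ] g → norm f = norm g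
  zero_mem : Mem 0
  add_mem : ∀ f g, Mem f → Mem g → Mem (f + g)
  smul_mem : ∀ (c : ℂ) (f), Mem f → Mem (c • f)
  norm_nonneg' : ∀ f, Mem f → 0 ≤ norm f
  norm_eq_zero_iff : ∀ f, Mem f → (norm f = 0 ↔ f =ᵐ[μ] 0)
  norm_add_le : ∀ f g, Mem f → Mem g → norm (f + g) ≤ norm f + norm g
  norm_smul' : ∀ (c : ℂ) (f), Mem f → norm (c • f) = ‖c‖ * norm f
  solid : ∀ f g, Mem f → Measurable g → (∀ᵐ x ∂μ, ‖g x‖ ≤ ‖f x‖) →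
    Mem g ∧ norm g ≤ norm f
  complete : ∀ F : ℕ → α → ℂ, (∀ n, Mem (F n)) →
    (∀ ε : ℝ, 0 < ε → ∃ N : ℕ, ∀ m n, N ≤ m → N ≤ n → norm (F m - F n) < ε) →
    ∃ f, Mem f ∧ Tendsto (fun n => norm (F n - f)) atTop (nhds 0)

namespace CompatAux


variable {α β : Type*} [MeasurableSpace α] [MeasurableSpace β]

theorem essSup_eq_iInf_rat (μ : Measure α) (f : α → ℝ≥0∞) :
    essSup f μ = ⨅ q : ℚ, if μ {x | (Real.toNNReal q : ℝ≥0∞) < f x} = 0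
      then (Real.toNNReal q : ℝ≥0∞) else ∞ := by
  classical
  have hmem : ∀ a : ℝ≥0∞, (∀ᵐ x ∂μ, f x ≤ a) ↔ μ {x | a < f x} = 0 := by
    intro a; rw [ae_iff]; simp only [not_le]
  apply le_antisymm
  · refine le_iInf fun q => ?_
    split_ifs with h
    · exact essSup_le_of_ae_le _ ((hmem _).2 h)
    · exact le_top
  · by_contra hlt
    push_neg at hlt
    obtain ⟨q, _, h1, h2⟩ := ENNReal.lt_iff_exists_rat_btwn.1 hlt
    have hq : μ {x | (Real.toNNReal q : ℝ≥0∞) < f x} = 0 := by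
      refine (hmem _).1 ?_
      filter_upwards [ENNReal.ae_le_essSup f] with x hx using hx.trans h1.le
    have : (⨅ q : ℚ, if μ {x | (Real.toNNReal q : ℝ≥0∞) < f x} = 0
        then (Real.toNNReal q : ℝ≥0∞) else ∞) ≤ (Real.toNNReal q : ℝ≥0∞) := by
      refine iInf_le_of_le q ?_
      rw [if_pos hq]
    exact absurd (this.trans_lt h2) (lt_irrefl _)

theorem measurable_essSup_section (μ : Measure α) [SigmaFinite μ] {F : α × β → ℝ≥0∞}
    (hF : Measurable F) : Measurable fun b => essSup (fun a => F (a, b)) μ := by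
  classical
  have hrw : (fun b => essSup (fun a => F (a, b)) μ)
      = fun b => ⨅ q : ℚ, if μ {a | (Real.toNNReal q : ℝ≥0∞) < F (a, b)} = 0
          then (Real.toNNReal q : ℝ≥0∞) else ∞ := by
    funext b; exact essSup_eq_iInf_rat μ _
  rw [hrw]
  refine Measurable.iInf fun q => ?_
  have hs : MeasurableSet {p : α × β | (Real.toNNReal q : ℝ≥0∞) < F p} :=
    measurableSet_lt measurable_const hF
  have hμ : Measurable fun b => μ ((fun a => (a, b)) ⁻¹' {p : α × β | (Real.toNNReal q : ℝ≥0∞) < F p}) :=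
    measurable_measure_prodMk_right hs
  have hset : MeasurableSet {b | μ {a | (Real.toNNReal q : ℝ≥0∞) < F (a, b)} = 0} := by
    have : {b | μ {a | (Real.toNNReal q : ℝ≥0∞) < F (a, b)} = 0}
        = (fun b => μ ((fun a => (a, b)) ⁻¹' {p : α × β | (Real.toNNReal q : ℝ≥0∞) < F p})) ⁻¹' {0} := rfl
    rw [this]
    exact hμ (measurableSet_singleton 0)
  exact Measurable.ite hset measurable_const measurable_const

theorem essSup_mul_const_le (μ : Measure α) (f : α → ℝ≥0∞) (c : ℝ≥0∞) :
    essSup (fun a => f a * c) μ ≤ essSup f μ * c :=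
  essSup_le_of_ae_le _ ((ENNReal.ae_le_essSup f).mono fun _ ha => mul_le_mul_left ha c)

theorem essSup_tsum_le (μ : Measure α) (f : ℕ → α → ℝ≥0∞) :
    essSup (fun a => ∑' n, f n a) μ ≤ ∑' n, essSup (f n) μ := by
  refine essSup_le_of_ae_le _ ?_
  have h : ∀ᵐ a ∂μ, ∀ n, f n a ≤ essSup (f n) μ := ae_all_iff.2 fun n => ENNReal.ae_le_essSup (f n)
  filter_upwards [h] with a ha using ENNReal.tsum_le_tsum ha

theorem essSup_essSup_le (μ₁ : Measure α) (μ₂ : Measure β) [SFinite μ₁] [SFinite μ₂]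
    {F : α × β → ℝ≥0∞} (hF : Measurable F) :
    essSup (fun b => essSup (fun a => F (a, b)) μ₁) μ₂ ≤ essSup F (μ₁.prod μ₂) := by
  set c := essSup F (μ₁.prod μ₂) with hc
  set s : Set (α × β) := {z | c < F z} with hsdef
  have hs : MeasurableSet s := measurableSet_lt measurable_const hF
  have h0 : (μ₁.prod μ₂) s = 0 := by
    have h := ENNReal.ae_le_essSup (μ := μ₁.prod μ₂) F
    rw [ae_iff] at h
    simpa [hsdef, not_le] using h
  have hs' : MeasurableSet (Prod.swap ⁻¹' s : Set (β × α)) := measurable_swap hs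
  have h0' : (μ₂.prod μ₁) (Prod.swap ⁻¹' s) = 0 := by
    rw [← Measure.prod_swap, Measure.map_apply measurable_swap hs']
    have : Prod.swap ⁻¹' (Prod.swap ⁻¹' s : Set (β × α)) = s := by
      ext z; simp
    rw [this]; exact h0
  have hae := (Measure.measure_prod_null hs').1 h0'
  refine essSup_le_of_ae_le _ ?_
  filter_upwards [hae] with b hb
  refine essSup_le_of_ae_le _ ?_
  simp only [Pi.zero_apply] at hb
  have hae2 : ∀ᵐ a ∂μ₁, F (a, b) ≤ c := by
    rw [ae_iff]
    have heq : {a | ¬ F (a, b) ≤ c} = Prod.mk b ⁻¹' (Prod.swap ⁻¹' s) := by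
      ext a; simp [hsdef, not_le]
    rw [heq]; exact hb
  exact hae2


variable {α β : Type*} [MeasurableSpace α] [MeasurableSpace β]


/-- The combined `𝒢`-type norm of an `ℝ≥0∞`-valued function. -/
def GnormENN (μ₁ : Measure α) (μ₂ : Measure β) (F : α × β → ℝ≥0∞) : ℝ≥0∞ :=
  max (max (∫⁻ z, F z ∂(μ₁.prod μ₂)) (essSup F (μ₁.prod μ₂)))
      (max (essSup (fun b => ∫⁻ a, F (a, b) ∂μ₁) μ₂) (∫⁻ b, essSup (fun a => F (a, b)) μ₁ ∂μ₂))

theorem Gnorm_eq_GnormENN (μ₁ : Measure α) (μ₂ : Measure β) (f : α × β → ℂ) :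
    Gnorm μ₁ μ₂ f = GnormENN μ₁ μ₂ (fun z => (‖f z‖₊ : ℝ≥0∞)) := by
  have h1 : mixedNorm μ₁ μ₂ 1 ∞ f = essSup (fun b => ∫⁻ a, (‖f (a, b)‖₊ : ℝ≥0∞) ∂μ₁) μ₂ := by
    simp [mixedNorm, mixedNormENN, lpNormENN, ENNReal.one_ne_top, ENNReal.toReal_one]
  have h2 : mixedNorm μ₁ μ₂ ∞ 1 f = ∫⁻ b, essSup (fun a => (‖f (a, b)‖₊ : ℝ≥0∞)) μ₁ ∂μ₂ := by
    simp [mixedNorm, mixedNormENN, lpNormENN, ENNReal.one_ne_top, ENNReal.toReal_one]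
  have h3 : eLpNorm f 1 (μ₁.prod μ₂) = ∫⁻ z, (‖f z‖₊ : ℝ≥0∞) ∂(μ₁.prod μ₂) :=
    eLpNorm_one_eq_lintegral_enorm
  have h4 : eLpNorm f ∞ (μ₁.prod μ₂) = essSup (fun z => (‖f z‖₊ : ℝ≥0∞)) (μ₁.prod μ₂) := by
    rw [eLpNorm_exponent_top, eLpNormEssSup]; rfl
  rw [Gnorm, GnormENN, h1, h2, h3, h4]

theorem GnormENN_mono (μ₁ : Measure α) (μ₂ : Measure β) {F G : α × β → ℝ≥0∞}
    (h : ∀ z, F z ≤ G z) : GnormENN μ₁ μ₂ F ≤ GnormENN μ₁ μ₂ G := by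
  refine max_le_max (max_le_max ?_ ?_) (max_le_max ?_ ?_)
  · exact lintegral_mono h
  · exact essSup_mono_ae (Eventually.of_forall h)
  · exact essSup_mono_ae (Eventually.of_forall fun b => lintegral_mono fun a => h (a, b))
  · exact lintegral_mono fun b => essSup_mono_ae (Eventually.of_forall fun a => h (a, b))

theorem GnormENN_const_mul_le (μ₁ : Measure α) (μ₂ : Measure β) (F : α × β → ℝ≥0∞)
    {c : ℝ≥0∞} (hc : c ≠ ∞) : GnormENN μ₁ μ₂ (fun z => c * F z) ≤ c * GnormENN μ₁ μ₂ F := by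
  refine max_le (max_le ?_ ?_) (max_le ?_ ?_)
  · rw [lintegral_const_mul' c _ hc]
    exact mul_le_mul_right ((le_max_left _ _).trans (le_max_left _ _)) c
  · rw [ENNReal.essSup_const_mul]
    exact mul_le_mul_right ((le_max_right _ _).trans (le_max_left _ _)) c
  · have : (fun b => ∫⁻ a, c * F (a, b) ∂μ₁) = fun b => c * ∫⁻ a, F (a, b) ∂μ₁ :=
      funext fun b => lintegral_const_mul' c _ hc
    rw [this, ENNReal.essSup_const_mul]
    exact mul_le_mul_right ((le_max_left _ _).trans (le_max_right _ _)) c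
  · have : (fun b => essSup (fun a => c * F (a, b)) μ₁) = fun b => c * essSup (fun a => F (a, b)) μ₁ :=
      funext fun b => ENNReal.essSup_const_mul
    calc ∫⁻ b, essSup (fun a => c * F (a, b)) μ₁ ∂μ₂
        = ∫⁻ b, c * essSup (fun a => F (a, b)) μ₁ ∂μ₂ := by rw [this]
      _ = c * ∫⁻ b, essSup (fun a => F (a, b)) μ₁ ∂μ₂ := lintegral_const_mul' c _ hc
      _ ≤ c * GnormENN μ₁ μ₂ F :=
          mul_le_mul_right ((le_max_right _ _).trans (le_max_right _ _)) c

theorem GnormENN_tsum_le (μ₁ : Measure α) (μ₂ : Measure β) [SigmaFinite μ₁]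
    {F : ℕ → α × β → ℝ≥0∞} (hF : ∀ n, Measurable (F n)) :
    GnormENN μ₁ μ₂ (fun z => ∑' n, F n z) ≤ ∑' n, GnormENN μ₁ μ₂ (F n) := by
  have hsec : ∀ n (b : β), Measurable fun a => F n (a, b) :=
    fun n b => (hF n).comp (measurable_id.prodMk measurable_const)
  refine max_le (max_le ?_ ?_) (max_le ?_ ?_)
  · rw [lintegral_tsum fun n => (hF n).aemeasurable]
    exact ENNReal.tsum_le_tsum fun n => (le_max_left _ _).trans (le_max_left _ _)
  · refine (essSup_tsum_le _ _).trans ?_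
    exact ENNReal.tsum_le_tsum fun n => (le_max_right _ _).trans (le_max_left _ _)
  · have heq : (fun b => ∫⁻ a, ∑' n, F n (a, b) ∂μ₁) = fun b => ∑' n, ∫⁻ a, F n (a, b) ∂μ₁ :=
      funext fun b => lintegral_tsum fun n => (hsec n b).aemeasurable
    rw [heq]
    refine (essSup_tsum_le _ _).trans ?_
    exact ENNReal.tsum_le_tsum fun n => (le_max_left _ _).trans (le_max_right _ _)
  · have hpt : ∀ b, essSup (fun a => ∑' n, F n (a, b)) μ₁
        ≤ ∑' n, essSup (fun a => F n (a, b)) μ₁ := fun b => essSup_tsum_le _ _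
    refine (lintegral_mono hpt).trans ?_
    rw [lintegral_tsum fun n => (measurable_essSup_section μ₁ (hF n)).aemeasurable]
    exact ENNReal.tsum_le_tsum fun n => (le_max_right _ _).trans (le_max_right _ _)

theorem normB_tensor_lt_top {X₁ X₂ Y₁ Y₂ : Type*} [MeasurableSpace X₁] [MeasurableSpace X₂]
    [MeasurableSpace Y₁] [MeasurableSpace Y₂]
    (μ₁ : Measure X₁) (μ₂ : Measure X₂) (ν₁ : Measure Y₁) (ν₂ : Measure Y₂)
    [SigmaFinite μ₁] [SigmaFinite μ₂] [SigmaFinite ν₁] [SigmaFinite ν₂]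
    {P : X₁ × X₂ → ℝ≥0∞} {Q : Y₁ × Y₂ → ℝ≥0∞} (hP : Measurable P) (hQ : Measurable Q)
    (hPfin : ∀ x, P x ≠ ∞) (hQfin : ∀ y, Q y ≠ ∞)
    (hPn : GnormENN μ₁ μ₂ P < ∞) (hQn : GnormENN ν₁ ν₂ Q < ∞) :
    normB μ₁ μ₂ ν₁ ν₂ (fun z => P z.1 * Q z.2) < ∞ := by
  set pI : X₂ → ℝ≥0∞ := fun b => essSup (fun a => P (a, b)) μ₁ with hpI
  set p1 : X₂ → ℝ≥0∞ := fun b => ∫⁻ a, P (a, b) ∂μ₁ with hp1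
  set qI : Y₂ → ℝ≥0∞ := fun b => essSup (fun a => Q (a, b)) ν₁ with hqI
  set q1 : Y₂ → ℝ≥0∞ := fun b => ∫⁻ a, Q (a, b) ∂ν₁ with hq1
  -- the four constants for P
  have hAP1 : (∫⁻ z, P z ∂(μ₁.prod μ₂)) < ∞ :=
    lt_of_le_of_lt ((le_max_left _ _).trans (le_max_left _ _)) hPn
  have hAPi : essSup P (μ₁.prod μ₂) < ∞ :=
    lt_of_le_of_lt ((le_max_right _ _).trans (le_max_left _ _)) hPn
  have hAP1i : essSup p1 μ₂ < ∞ :=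
    lt_of_le_of_lt ((le_max_left _ _).trans (le_max_right _ _)) hPn
  have hAPi1 : (∫⁻ b, pI b ∂μ₂) < ∞ :=
    lt_of_le_of_lt ((le_max_right _ _).trans (le_max_right _ _)) hPn
  have hAQ1 : (∫⁻ z, Q z ∂(ν₁.prod ν₂)) < ∞ :=
    lt_of_le_of_lt ((le_max_left _ _).trans (le_max_left _ _)) hQn
  have hAQi : essSup Q (ν₁.prod ν₂) < ∞ :=
    lt_of_le_of_lt ((le_max_right _ _).trans (le_max_left _ _)) hQn
  have hAQ1i : essSup q1 ν₂ < ∞ :=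
    lt_of_le_of_lt ((le_max_left _ _).trans (le_max_right _ _)) hQn
  have hAQi1 : (∫⁻ b, qI b ∂ν₂) < ∞ :=
    lt_of_le_of_lt ((le_max_right _ _).trans (le_max_right _ _)) hQn
  -- iterated ess sups are bounded by the product ones
  have hPii : essSup pI μ₂ ≤ essSup P (μ₁.prod μ₂) := essSup_essSup_le μ₁ μ₂ hP
  have hQii : essSup qI ν₂ ≤ essSup Q (ν₁.prod ν₂) := essSup_essSup_le ν₁ ν₂ hQ
  -- Tonelli
  have hPtone : (∫⁻ b, p1 b ∂μ₂) = ∫⁻ z, P z ∂(μ₁.prod μ₂) :=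
    (MeasureTheory.lintegral_prod_symm P hP.aemeasurable).symm
  have hQtone : (∫⁻ b, q1 b ∂ν₂) = ∫⁻ z, Q z ∂(ν₁.prod ν₂) :=
    (MeasureTheory.lintegral_prod_symm Q hQ.aemeasurable).symm
  -- measurability
  have hq1m : Measurable q1 := hQ.lintegral_prod_left'
  have hp1m : Measurable p1 := hP.lintegral_prod_left'
  have hpIm : Measurable pI := measurable_essSup_section μ₁ hP
  -- inner bound
  have hinner : ∀ x₂ y₂, normA μ₁ ν₁ (fun t => P (t.1, x₂) * Q (t.2, y₂))
      ≤ pI x₂ * q1 y₂ + p1 x₂ * qI y₂ := by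
    intro x₂ y₂
    refine max_le ?_ ?_
    · have h1 : (fun x₁ => ∫⁻ y₁, P (x₁, x₂) * Q (y₁, y₂) ∂ν₁)
          = fun x₁ => P (x₁, x₂) * q1 y₂ :=
        funext fun x₁ => lintegral_const_mul' _ _ (hPfin _)
      rw [h1]
      exact (essSup_mul_const_le μ₁ _ _).trans le_self_add
    · have h2 : (fun y₁ => ∫⁻ x₁, P (x₁, x₂) * Q (y₁, y₂) ∂μ₁)
          = fun y₁ => p1 x₂ * Q (y₁, y₂) :=
        funext fun y₁ => lintegral_mul_const' _ _ (hQfin _)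
      rw [h2]
      have h3 : essSup (fun y₁ => p1 x₂ * Q (y₁, y₂)) ν₁ = p1 x₂ * qI y₂ :=
        ENNReal.essSup_const_mul
      rw [h3]
      exact le_add_self
  rw [normB, normA]
  refine max_lt ?_ ?_
  · -- essSup over x₂ of ∫⁻ y₂
    have hbb : ∀ᵐ x₂ ∂μ₂, (∫⁻ y₂, normA μ₁ ν₁ (fun t => P (t.1, x₂) * Q (t.2, y₂)) ∂ν₂)
        ≤ essSup P (μ₁.prod μ₂) * (∫⁻ z, Q z ∂(ν₁.prod ν₂)) + essSup p1 μ₂ * (∫⁻ b, qI b ∂ν₂) := by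
      filter_upwards [ENNReal.ae_le_essSup pI, ENNReal.ae_le_essSup p1] with x₂ h1 h2
      have h1' : pI x₂ ≤ essSup P (μ₁.prod μ₂) := h1.trans hPii
      have hpIfin : pI x₂ ≠ ∞ := (h1'.trans_lt hAPi).ne
      have hp1fin : p1 x₂ ≠ ∞ := (h2.trans_lt hAP1i).ne
      calc (∫⁻ y₂, normA μ₁ ν₁ (fun t => P (t.1, x₂) * Q (t.2, y₂)) ∂ν₂)
          ≤ ∫⁻ y₂, (pI x₂ * q1 y₂ + p1 x₂ * qI y₂) ∂ν₂ := lintegral_mono (hinner x₂)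
        _ = (∫⁻ y₂, pI x₂ * q1 y₂ ∂ν₂) + ∫⁻ y₂, p1 x₂ * qI y₂ ∂ν₂ :=
            lintegral_add_left (measurable_const.mul hq1m) _
        _ = pI x₂ * (∫⁻ y₂, q1 y₂ ∂ν₂) + p1 x₂ * (∫⁻ y₂, qI y₂ ∂ν₂) := by
            rw [lintegral_const_mul' _ _ hpIfin, lintegral_const_mul' _ _ hp1fin]
        _ ≤ essSup P (μ₁.prod μ₂) * (∫⁻ z, Q z ∂(ν₁.prod ν₂)) + essSup p1 μ₂ * (∫⁻ b, qI b ∂ν₂) := by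
            rw [hQtone]
            exact add_le_add (mul_le_mul' h1' le_rfl) (mul_le_mul' h2 le_rfl)
    refine lt_of_le_of_lt (essSup_le_of_ae_le _ hbb) ?_
    exact ENNReal.add_lt_top.2 ⟨ENNReal.mul_lt_top hAPi hAQ1, ENNReal.mul_lt_top hAP1i hAQi1⟩
  · -- essSup over y₂ of ∫⁻ x₂
    have hbb : ∀ᵐ y₂ ∂ν₂, (∫⁻ x₂, normA μ₁ ν₁ (fun t => P (t.1, x₂) * Q (t.2, y₂)) ∂μ₂)
        ≤ (∫⁻ b, pI b ∂μ₂) * essSup q1 ν₂ + (∫⁻ z, P z ∂(μ₁.prod μ₂)) * essSup Q (ν₁.prod ν₂) := by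
      filter_upwards [ENNReal.ae_le_essSup qI, ENNReal.ae_le_essSup q1] with y₂ h1 h2
      have h1' : qI y₂ ≤ essSup Q (ν₁.prod ν₂) := h1.trans hQii
      have hqIfin : qI y₂ ≠ ∞ := (h1'.trans_lt hAQi).ne
      have hq1fin : q1 y₂ ≠ ∞ := (h2.trans_lt hAQ1i).ne
      calc (∫⁻ x₂, normA μ₁ ν₁ (fun t => P (t.1, x₂) * Q (t.2, y₂)) ∂μ₂)
          ≤ ∫⁻ x₂, (pI x₂ * q1 y₂ + p1 x₂ * qI y₂) ∂μ₂ :=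
            lintegral_mono fun x₂ => hinner x₂ y₂
        _ = (∫⁻ x₂, pI x₂ * q1 y₂ ∂μ₂) + ∫⁻ x₂, p1 x₂ * qI y₂ ∂μ₂ :=
            lintegral_add_left (hpIm.mul measurable_const) _
        _ = (∫⁻ b, pI b ∂μ₂) * q1 y₂ + (∫⁻ b, p1 b ∂μ₂) * qI y₂ := by
            rw [lintegral_mul_const' _ _ hq1fin, lintegral_mul_const' _ _ hqIfin]
        _ ≤ (∫⁻ b, pI b ∂μ₂) * essSup q1 ν₂ + (∫⁻ z, P z ∂(μ₁.prod μ₂)) * essSup Q (ν₁.prod ν₂) := by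
            rw [hPtone]
            exact add_le_add (mul_le_mul' le_rfl h2) (mul_le_mul' le_rfl h1')
    refine lt_of_le_of_lt (essSup_le_of_ae_le _ hbb) ?_
    exact ENNReal.add_lt_top.2 ⟨ENNReal.mul_lt_top hAPi1 hAQ1i, ENNReal.mul_lt_top hAP1 hAQi⟩

theorem GnormENN_indicator_lt_top (μ₁ : Measure α) (μ₂ : Measure β)
    [SigmaFinite μ₁] [SigmaFinite μ₂]
    {E₁ : Set α} {E₂ : Set β} (h₁ : MeasurableSet E₁) (h₂ : MeasurableSet E₂)
    (hE₁ : μ₁ E₁ < ∞) (hE₂ : μ₂ E₂ < ∞) {k : ℝ≥0∞} (hk : k ≠ ∞) :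
    GnormENN μ₁ μ₂ ((E₁ ×ˢ E₂).indicator (fun _ => k)) < ∞ := by
  classical
  have hle : ∀ z : α × β, (E₁ ×ˢ E₂).indicator (fun _ => k) z ≤ k := by
    intro z
    by_cases hz : z ∈ E₁ ×ˢ E₂
    · rw [Set.indicator_of_mem hz]
    · rw [Set.indicator_of_notMem hz]; exact zero_le
  refine max_lt (max_lt ?_ ?_) (max_lt ?_ ?_)
  · rw [lintegral_indicator_const (h₁.prod h₂), Measure.prod_prod]
    exact ENNReal.mul_lt_top hk.lt_top (ENNReal.mul_lt_top hE₁ hE₂)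
  · exact lt_of_le_of_lt (essSup_le_of_ae_le k (Eventually.of_forall hle)) hk.lt_top
  · refine lt_of_le_of_lt (essSup_le_of_ae_le (k * μ₁ E₁) (Eventually.of_forall fun b => ?_))
      (ENNReal.mul_lt_top hk.lt_top hE₁)
    have hpt : ∀ a, (E₁ ×ˢ E₂).indicator (fun _ => k) (a, b) ≤ E₁.indicator (fun _ => k) a := by
      intro a
      by_cases ha : (a, b) ∈ E₁ ×ˢ E₂
      · rw [Set.indicator_of_mem ha, Set.indicator_of_mem ha.1]
      · rw [Set.indicator_of_notMem ha]; exact zero_le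
    exact (lintegral_mono hpt).trans (le_of_eq (lintegral_indicator_const h₁ k))
  · have hpt : ∀ b, essSup (fun a => (E₁ ×ˢ E₂).indicator (fun _ => k) (a, b)) μ₁
        ≤ E₂.indicator (fun _ => k) b := by
      intro b
      by_cases hb : b ∈ E₂
      · rw [Set.indicator_of_mem hb]
        exact essSup_le_of_ae_le k (Eventually.of_forall fun a => hle (a, b))
      · rw [Set.indicator_of_notMem hb]
        refine essSup_le_of_ae_le 0 (Eventually.of_forall fun a => ?_)
        have hnm : (a, b) ∉ E₁ ×ˢ E₂ := fun hab => hb hab.2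
        show (E₁ ×ˢ E₂).indicator (fun _ => k) (a, b) ≤ 0
        rw [Set.indicator_of_notMem hnm]
    exact lt_of_le_of_lt ((lintegral_mono hpt).trans (le_of_eq (lintegral_indicator_const h₂ k)))
      (ENNReal.mul_lt_top hk.lt_top hE₂)

theorem normB_mono {X₁ X₂ Y₁ Y₂ : Type*} [MeasurableSpace X₁] [MeasurableSpace X₂]
    [MeasurableSpace Y₁] [MeasurableSpace Y₂]
    (μ₁ : Measure X₁) (μ₂ : Measure X₂) (ν₁ : Measure Y₁) (ν₂ : Measure Y₂)
    {F G : (X₁ × X₂) × (Y₁ × Y₂) → ℝ≥0∞} (h : ∀ z, F z ≤ G z) :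
    normB μ₁ μ₂ ν₁ ν₂ F ≤ normB μ₁ μ₂ ν₁ ν₂ G := by
  have hA : ∀ s : X₂ × Y₂, normA μ₁ ν₁ (fun t => F ((t.1, s.1), (t.2, s.2)))
      ≤ normA μ₁ ν₁ (fun t => G ((t.1, s.1), (t.2, s.2))) := by
    intro s
    exact max_le_max
      (essSup_mono_ae (Eventually.of_forall fun u => lintegral_mono fun v => h _))
      (essSup_mono_ae (Eventually.of_forall fun v => lintegral_mono fun u => h _))
  exact max_le_max
    (essSup_mono_ae (Eventually.of_forall fun u => lintegral_mono fun v => hA _))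
    (essSup_mono_ae (Eventually.of_forall fun v => lintegral_mono fun u => hA _))

end CompatAux

open CompatAux

/-- Necessary conditions for spaces compatible with `𝓑_m`: the target space contains
`𝒢_v = (L¹ ∩ L^∞ ∩ L^{1,∞} ∩ L^{∞,1})_v`
(Theorem `thm:NecessaryConditionsForCompatibleSpaces` (1)). -/
theorem compatible_space_contains_Gv
    {X₁ X₂ Y₁ Y₂ : Type*} [MeasurableSpace X₁] [MeasurableSpace X₂]
    [MeasurableSpace Y₁] [MeasurableSpace Y₂]
    (μ₁ : Measure X₁) (μ₂ : Measure X₂) (ν₁ : Measure Y₁) (ν₂ : Measure Y₂)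
    [SigmaFinite μ₁] [SigmaFinite μ₂] [SigmaFinite ν₁] [SigmaFinite ν₂]
    (m : (X₁ × X₂) × (Y₁ × Y₂) → ℝ) (hm : Measurable m) (hm_pos : ∀ z, 0 < m z)
    (A : SolidBanachFunctionSpace (Y₁ × Y₂) (ν₁.prod ν₂))
    (B : SolidBanachFunctionSpace (X₁ × X₂) (μ₁.prod μ₂))
    (v : X₁ × X₂ → ℝ) (w : Y₁ × Y₂ → ℝ) (hv : Measurable v) (hw : Measurable w)
    (hv_pos : ∀ x, 0 < v x) (hw_pos : ∀ y, 0 < w y)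
    (C : ℝ) (hC : 0 < C)
    (hm_le : ∀ (x : X₁ × X₂) (y : Y₁ × Y₂), m (x, y) ≤ C * v x * w y)
    (hA_ne : ∃ f, A.Mem f ∧ ¬ f =ᵐ[ν₁.prod ν₂] 0)
    (hop : ∀ K : (X₁ × X₂) × (Y₁ × Y₂) → ℂ, Measurable K →
      normBm μ₁ μ₂ ν₁ ν₂ m K < ∞ → ∀ f, A.Mem f →
        (∀ᵐ x ∂(μ₁.prod μ₂), Integrable (fun y => K (x, y) * f y) (ν₁.prod ν₂)) ∧
        B.Mem (fun x => ∫ y, K (x, y) * f y ∂(ν₁.prod ν₂))) :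
    ∃ C' : ℝ, 0 < C' ∧ ∀ f : X₁ × X₂ → ℂ, Measurable f →
      Gnorm μ₁ μ₂ (fun x => (v x : ℂ) * f x) < ∞ →
      B.Mem f ∧ B.norm f ≤ C' * (Gnorm μ₁ μ₂ (fun x => (v x : ℂ) * f x)).toReal := by
  classical
  obtain ⟨f₀, hf₀A, hf₀ne⟩ := hA_ne
  have hf₀m : Measurable f₀ := A.mem_measurable f₀ hf₀A
  have hvmul : ∀ (φ : X₁ × X₂ → ℂ) (x : X₁ × X₂),
      (‖(v x : ℂ) * φ x‖₊ : ℝ≥0∞) = ENNReal.ofReal (v x) * (‖φ x‖₊ : ℝ≥0∞) := by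
    intro φ x
    rw [nnnorm_mul, ENNReal.coe_mul, Complex.nnnorm_real, ← enorm_eq_nnnorm (v x), Real.enorm_eq_ofReal (hv_pos x).le]
  -- truncation sets
  set R : ℕ → Set (Y₁ × Y₂) := fun n => spanningSets ν₁ n ×ˢ spanningSets ν₂ n with hRdef
  set S : ℕ → Set (Y₁ × Y₂) := fun n =>
    (R n ∩ {z | ‖f₀ z‖ ≤ (n : ℝ)}) ∩ {z | w z ≤ (n : ℝ)} with hSdef
  have hSmeas : ∀ n, MeasurableSet (S n) := by
    intro n
    exact (((measurableSet_spanningSets ν₁ n).prod (measurableSet_spanningSets ν₂ n)).inter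
      (measurableSet_le hf₀m.norm measurable_const)).inter
      (measurableSet_le hw measurable_const)
  have hSunion : ∀ z, ∃ n, z ∈ S n := by
    intro z
    have h1 : z.1 ∈ ⋃ i, spanningSets ν₁ i := by
      rw [iUnion_spanningSets]; exact Set.mem_univ _
    have h2 : z.2 ∈ ⋃ i, spanningSets ν₂ i := by
      rw [iUnion_spanningSets]; exact Set.mem_univ _
    obtain ⟨n₁, hn₁⟩ := Set.mem_iUnion.1 h1
    obtain ⟨n₂, hn₂⟩ := Set.mem_iUnion.1 h2
    obtain ⟨n₃, hn₃⟩ := exists_nat_ge (max ‖f₀ z‖ (w z))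
    have hcast : (n₃ : ℝ) ≤ ((max (max n₁ n₂) n₃ : ℕ) : ℝ) := Nat.cast_le.2 (le_max_right _ _)
    refine ⟨max (max n₁ n₂) n₃, ⟨⟨?_, ?_⟩, ?_⟩⟩
    · exact ⟨monotone_spanningSets ν₁ ((le_max_left n₁ n₂).trans (le_max_left _ n₃)) hn₁,
        monotone_spanningSets ν₂ ((le_max_right n₁ n₂).trans (le_max_left _ n₃)) hn₂⟩
    · exact ((le_max_left _ _).trans hn₃).trans hcast
    · exact ((le_max_right _ _).trans hn₃).trans hcast
  have hT : (ν₁.prod ν₂) {z | f₀ z ≠ 0} ≠ 0 := by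
    intro h
    apply hf₀ne
    have hae : ∀ᵐ z ∂(ν₁.prod ν₂), f₀ z = 0 := by
      rw [ae_iff]; simpa using h
    filter_upwards [hae] with z hz
    simpa using hz
  obtain ⟨n, hn⟩ : ∃ n, (ν₁.prod ν₂) ({z | f₀ z ≠ 0} ∩ S n) ≠ 0 := by
    by_contra h
    push_neg at h
    apply hT
    have hcov : {z | f₀ z ≠ 0} = ⋃ i, ({z | f₀ z ≠ 0} ∩ S i) := by
      ext z
      simp only [Set.mem_iUnion, Set.mem_inter_iff, Set.mem_setOf_eq]
      exact ⟨fun hz => (hSunion z).imp fun i hi => ⟨hz, hi⟩, fun ⟨i, hz, _⟩ => hz⟩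
    rw [hcov]
    exact measure_iUnion_null h
  set g : Y₁ × Y₂ → ℂ := (S n).indicator f₀ with hgdef
  have hgm : Measurable g := hf₀m.indicator (hSmeas n)
  have hgA : A.Mem g :=
    (A.solid f₀ g hf₀A hgm (Eventually.of_forall fun y => norm_indicator_le_norm_self f₀ y)).1
  have hgne : ¬ g =ᵐ[ν₁.prod ν₂] 0 := by
    intro h
    apply hn
    have hsub : {z | f₀ z ≠ 0} ∩ S n ⊆ {z | g z ≠ 0} := by
      rintro z ⟨hz1, hz2⟩
      have hgz : g z = f₀ z := by rw [hgdef]; exact Set.indicator_of_mem hz2 f₀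
      simp only [Set.mem_setOf_eq, hgz]
      exact hz1
    have h0 : (ν₁.prod ν₂) {z | g z ≠ 0} = 0 := by
      have h' : ∀ᵐ z ∂(ν₁.prod ν₂), g z = 0 := by
        filter_upwards [h] with z hz
        simpa using hz
      rw [ae_iff] at h'
      simpa using h'
    exact measure_mono_null hsub h0
  have hRmeas₁ : MeasurableSet (spanningSets ν₁ n) := measurableSet_spanningSets ν₁ n
  have hRmeas₂ : MeasurableSet (spanningSets ν₂ n) := measurableSet_spanningSets ν₂ n
  have hgnorm_le : ∀ y, (‖g y‖₊ : ℝ≥0∞) ≤ (R n).indicator (fun _ => ENNReal.ofReal n) y := by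
    intro y
    by_cases hy : y ∈ S n
    · have hyR : y ∈ R n := hy.1.1
      rw [hgdef, Set.indicator_of_mem hy, Set.indicator_of_mem hyR,
        ← enorm_eq_nnnorm, ← ofReal_norm_eq_enorm]
      exact ENNReal.ofReal_le_ofReal hy.1.2
    · rw [hgdef, Set.indicator_of_notMem hy]
      simp
  have hwg_le : ∀ y, ENNReal.ofReal (w y) * (‖g y‖₊ : ℝ≥0∞)
      ≤ (R n).indicator (fun _ => ENNReal.ofReal n * ENNReal.ofReal n) y := by
    intro y
    by_cases hy : y ∈ S n
    · have hyR : y ∈ R n := hy.1.1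
      rw [Set.indicator_of_mem hyR]
      refine mul_le_mul' (ENNReal.ofReal_le_ofReal hy.2) ?_
      have h := hgnorm_le y
      rwa [Set.indicator_of_mem hyR] at h
    · rw [hgdef, Set.indicator_of_notMem hy]
      simp
  set c : ℝ≥0∞ := ∫⁻ y, (‖g y‖₊ : ℝ≥0∞) ^ 2 ∂(ν₁.prod ν₂) with hcdef
  have hsq_le : ∀ y, (‖g y‖₊ : ℝ≥0∞) ^ 2
      ≤ (R n).indicator (fun _ => ENNReal.ofReal n * ENNReal.ofReal n) y := by
    intro y
    by_cases hy : y ∈ R n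
    · rw [Set.indicator_of_mem hy]
      have h := hgnorm_le y
      rw [Set.indicator_of_mem hy] at h
      calc (‖g y‖₊ : ℝ≥0∞) ^ 2 = (‖g y‖₊ : ℝ≥0∞) * (‖g y‖₊ : ℝ≥0∞) := sq _
        _ ≤ ENNReal.ofReal n * ENNReal.ofReal n := mul_le_mul' h h
    · have h := hgnorm_le y
      rw [Set.indicator_of_notMem hy] at h
      rw [Set.indicator_of_notMem hy]
      have hz : (‖g y‖₊ : ℝ≥0∞) = 0 := le_antisymm h zero_le
      rw [hz]
      simp
  have hcT : c ≠ ∞ := by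
    have hle : c ≤ ENNReal.ofReal n * ENNReal.ofReal n * ((ν₁.prod ν₂) (R n)) := by
      rw [hcdef]
      exact (lintegral_mono hsq_le).trans
        (le_of_eq (lintegral_indicator_const (hRmeas₁.prod hRmeas₂) _))
    refine ne_of_lt (lt_of_le_of_lt hle ?_)
    rw [hRdef]
    simp only
    rw [Measure.prod_prod]
    exact ENNReal.mul_lt_top
      (ENNReal.mul_lt_top ENNReal.ofReal_lt_top ENNReal.ofReal_lt_top)
      (ENNReal.mul_lt_top (measure_spanningSets_lt_top ν₁ n) (measure_spanningSets_lt_top ν₂ n))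
  have hc0 : c ≠ 0 := by
    intro h0
    apply hgne
    have hmeas : Measurable fun y => (‖g y‖₊ : ℝ≥0∞) ^ 2 := hgm.enorm.pow_const 2
    have hz := (lintegral_eq_zero_iff hmeas).1 h0
    filter_upwards [hz] with y hy
    simp only [Pi.zero_apply] at hy ⊢
    have h1 : (‖g y‖₊ : ℝ≥0∞) = 0 := pow_eq_zero_iff (n := 2) (by norm_num) |>.1 hy
    rw [ENNReal.coe_eq_zero, nnnorm_eq_zero] at h1
    exact h1
  set cr : ℝ := c.toReal with hcrdef
  have hcr : 0 < cr := ENNReal.toReal_pos hc0 hcT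
  set Q : Y₁ × Y₂ → ℝ≥0∞ := fun y => ENNReal.ofReal (w y) * (‖g y‖₊ : ℝ≥0∞) with hQdef
  have hQm : Measurable Q := (ENNReal.measurable_ofReal.comp hw).mul hgm.enorm
  have hQfin : ∀ y, Q y ≠ ∞ := fun y =>
    ENNReal.mul_ne_top ENNReal.ofReal_ne_top ENNReal.coe_ne_top
  have hQn : GnormENN ν₁ ν₂ Q < ∞ :=
    lt_of_le_of_lt (GnormENN_mono ν₁ ν₂ hwg_le)
      (GnormENN_indicator_lt_top ν₁ ν₂ hRmeas₁ hRmeas₂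
        (measure_spanningSets_lt_top ν₁ n) (measure_spanningSets_lt_top ν₂ n)
        (ENNReal.mul_ne_top ENNReal.ofReal_ne_top ENNReal.ofReal_ne_top))
  -- membership of all admissible functions in B
  have hmem : ∀ f : X₁ × X₂ → ℂ, Measurable f →
      Gnorm μ₁ μ₂ (fun x => (v x : ℂ) * f x) < ∞ → B.Mem f := by
    intro f hf hfin
    set K : (X₁ × X₂) × (Y₁ × Y₂) → ℂ :=
      fun z => ((cr⁻¹ : ℝ) : ℂ) * f z.1 * (starRingEnd ℂ) (g z.2) with hKdef
    have hKm : Measurable K := by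
      have h1 : Measurable fun z : (X₁ × X₂) × (Y₁ × Y₂) => f z.1 := hf.comp measurable_fst
      have h2 : Measurable fun z : (X₁ × X₂) × (Y₁ × Y₂) => (starRingEnd ℂ) (g z.2) :=
        Complex.continuous_conj.measurable.comp (hgm.comp measurable_snd)
      exact (measurable_const.mul h1).mul h2
    set P : X₁ × X₂ → ℝ≥0∞ :=
      fun x => ENNReal.ofReal (C * cr⁻¹) * (‖(v x : ℂ) * f x‖₊ : ℝ≥0∞) with hPdef
    have hPm : Measurable P := by
      have h1 : Measurable fun x => (v x : ℂ) * f x :=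
        (Complex.measurable_ofReal.comp hv).mul hf
      exact measurable_const.mul h1.enorm
    have hPfin : ∀ x, P x ≠ ∞ := fun x =>
      ENNReal.mul_ne_top ENNReal.ofReal_ne_top ENNReal.coe_ne_top
    have hPn : GnormENN μ₁ μ₂ P < ∞ := by
      refine lt_of_le_of_lt (GnormENN_const_mul_le μ₁ μ₂ _ ENNReal.ofReal_ne_top) ?_
      rw [← Gnorm_eq_GnormENN]
      exact ENNReal.mul_lt_top ENNReal.ofReal_lt_top hfin
    have hpoint : ∀ z : (X₁ × X₂) × (Y₁ × Y₂),
        ENNReal.ofReal (m z) * (‖K z‖₊ : ℝ≥0∞) ≤ P z.1 * Q z.2 := by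
      intro z
      have hKval : (‖K z‖₊ : ℝ≥0∞)
          = ENNReal.ofReal cr⁻¹ * (‖f z.1‖₊ : ℝ≥0∞) * (‖g z.2‖₊ : ℝ≥0∞) := by
        rw [hKdef]
        simp only [nnnorm_mul, ENNReal.coe_mul, RCLike.nnnorm_conj]
        rw [Complex.nnnorm_real, ← enorm_eq_nnnorm cr⁻¹, Real.enorm_eq_ofReal (inv_nonneg.2 hcr.le)]
      have hm' : ENNReal.ofReal (m z)
          ≤ ENNReal.ofReal C * ENNReal.ofReal (v z.1) * ENNReal.ofReal (w z.2) := by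
        rw [← ENNReal.ofReal_mul hC.le, ← ENNReal.ofReal_mul (mul_nonneg hC.le (hv_pos z.1).le)]
        exact ENNReal.ofReal_le_ofReal (hm_le z.1 z.2)
      calc ENNReal.ofReal (m z) * (‖K z‖₊ : ℝ≥0∞)
          ≤ (ENNReal.ofReal C * ENNReal.ofReal (v z.1) * ENNReal.ofReal (w z.2))
            * (‖K z‖₊ : ℝ≥0∞) := mul_le_mul_left hm' _
        _ = P z.1 * Q z.2 := by
            simp only [hPdef, hQdef]
            rw [hKval, hvmul f z.1, ENNReal.ofReal_mul hC.le]
            ring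
    have hKnorm : normBm μ₁ μ₂ ν₁ ν₂ m K < ∞ := by
      have hrfl : normBm μ₁ μ₂ ν₁ ν₂ m K
          = normB μ₁ μ₂ ν₁ ν₂ (fun z => ENNReal.ofReal (m z) * (‖K z‖₊ : ℝ≥0∞)) := rfl
      rw [hrfl]
      exact lt_of_le_of_lt (normB_mono μ₁ μ₂ ν₁ ν₂ hpoint)
        (normB_tensor_lt_top μ₁ μ₂ ν₁ ν₂ hPm hQm hPfin hQfin hPn hQn)
    obtain ⟨-, hBmem⟩ := hop K hKm hKnorm g hgA
    have hgsq : ∀ y, (starRingEnd ℂ) (g y) * g y = Complex.ofReal (‖g y‖ ^ 2) := by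
      intro y
      rw [mul_comm, Complex.mul_conj, Complex.normSq_eq_norm_sq]
    have hint2 : ∫ y, ‖g y‖ ^ 2 ∂(ν₁.prod ν₂) = cr := by
      rw [integral_eq_lintegral_of_nonneg_ae (Eventually.of_forall fun y => sq_nonneg _)
        (hgm.norm.pow_const 2).aestronglyMeasurable]
      simp only [hcrdef, hcdef]
      congr 1
      refine lintegral_congr fun y => ?_
      rw [ENNReal.ofReal_pow (norm_nonneg _), ofReal_norm_eq_enorm, enorm_eq_nnnorm]
    have heq : (fun x => ∫ y, K (x, y) * g y ∂(ν₁.prod ν₂)) = f := by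
      funext x
      have h1 : ∀ y, K (x, y) * g y
          = (Complex.ofReal cr⁻¹ * f x) * Complex.ofReal (‖g y‖ ^ 2) := by
        intro y
        rw [hKdef, ← hgsq y]
        ring
      calc ∫ y, K (x, y) * g y ∂(ν₁.prod ν₂)
          = ∫ y, (Complex.ofReal cr⁻¹ * f x) * Complex.ofReal (‖g y‖ ^ 2) ∂(ν₁.prod ν₂) := by
            simp only [h1]
        _ = (Complex.ofReal cr⁻¹ * f x) * ∫ y, Complex.ofReal (‖g y‖ ^ 2) ∂(ν₁.prod ν₂) :=
            integral_const_mul _ _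
        _ = (Complex.ofReal cr⁻¹ * f x) * Complex.ofReal cr := by
            have hIR : ∫ y, Complex.ofReal (‖g y‖ ^ 2) ∂(ν₁.prod ν₂)
                = Complex.ofReal (∫ y, ‖g y‖ ^ 2 ∂(ν₁.prod ν₂)) := integral_ofReal
            rw [hIR, hint2]
        _ = f x := by
            rw [mul_comm (Complex.ofReal cr⁻¹) (f x), mul_assoc, ← Complex.ofReal_mul,
              inv_mul_cancel₀ hcr.ne', Complex.ofReal_one, mul_one]
    rw [← heq]
    exact hBmem
  -- it suffices to establish the uniform norm bound
  suffices hbd : ∃ C' : ℝ, 0 < C' ∧ ∀ f : X₁ × X₂ → ℂ, Measurable f →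
      Gnorm μ₁ μ₂ (fun x => (v x : ℂ) * f x) < ∞ →
      B.norm f ≤ C' * (Gnorm μ₁ μ₂ (fun x => (v x : ℂ) * f x)).toReal by
    obtain ⟨C', hC', hb⟩ := hbd
    exact ⟨C', hC', fun f hf hfin => ⟨hmem f hf hfin, hb f hf hfin⟩⟩
  by_contra hcon
  push_neg at hcon
  choose F hFm hFfin hFbig using fun k : ℕ => hcon ((4 : ℝ) ^ k) (by positivity)
  have hBF : ∀ k, B.Mem (F k) := fun k => hmem (F k) (hFm k) (hFfin k)
  have hG0 : ∀ k, Gnorm μ₁ μ₂ (fun x => (v x : ℂ) * F k x) ≠ 0 := by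
    intro k h0
    have h1 : eLpNorm (fun x => (v x : ℂ) * F k x) 1 (μ₁.prod μ₂) = 0 := by
      refine le_antisymm ?_ zero_le
      rw [← h0]
      exact (le_max_left _ _).trans (le_max_left _ _)
    have hvm : Measurable fun x => (v x : ℂ) * F k x :=
      (Complex.measurable_ofReal.comp hv).mul (hFm k)
    have h2 : (fun x => (v x : ℂ) * F k x) =ᵐ[μ₁.prod μ₂] 0 :=
      (eLpNorm_eq_zero_iff hvm.aestronglyMeasurable one_ne_zero).1 h1
    have h3 : F k =ᵐ[μ₁.prod μ₂] (0 : X₁ × X₂ → ℂ) := by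
      filter_upwards [h2] with x hx
      simp only [Pi.zero_apply] at hx ⊢
      rcases mul_eq_zero.1 hx with h | h
      · exfalso
        have hvx : v x = 0 := by exact_mod_cast h
        exact (hv_pos x).ne' hvx
      · exact h
    have h4 : B.norm (F k) = 0 := by
      rw [B.norm_congr (F k) 0 (hBF k) B.zero_mem h3]
      exact (B.norm_eq_zero_iff 0 B.zero_mem).2 EventuallyEq.rfl
    have h5 := hFbig k
    rw [h0, h4] at h5
    simp at h5
  have hGT : ∀ k, Gnorm μ₁ μ₂ (fun x => (v x : ℂ) * F k x) ≠ ∞ := fun k => (hFfin k).ne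
  set G : ℕ → ℝ≥0∞ := fun k => Gnorm μ₁ μ₂ (fun x => (v x : ℂ) * F k x) with hGdef
  set wt : ℕ → ℝ≥0∞ := fun k => (2⁻¹ : ℝ≥0∞) ^ k * (G k)⁻¹ with hwt
  have hwt0 : ∀ k, wt k ≠ 0 := fun k =>
    mul_ne_zero (pow_ne_zero k (by norm_num)) (ENNReal.inv_ne_zero.2 (hGT k))
  have hwtT : ∀ k, wt k ≠ ∞ := fun k =>
    ENNReal.mul_ne_top (ENNReal.pow_ne_top (by norm_num)) (ENNReal.inv_ne_top.2 (hG0 k))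
  set Φ : ℕ → X₁ × X₂ → ℝ≥0∞ := fun k x => (‖(v x : ℂ) * F k x‖₊ : ℝ≥0∞) with hΦ
  have hΦm : ∀ k, Measurable (Φ k) := fun k =>
    ((Complex.measurable_ofReal.comp hv).mul (hFm k)).enorm
  have hGeq : ∀ k, GnormENN μ₁ μ₂ (Φ k) = G k := by
    intro k
    simp only [hGdef, hΦ, Gnorm_eq_GnormENN]
  set U : X₁ × X₂ → ℝ≥0∞ := fun x => ∑' k, wt k * Φ k x with hUdef
  have hUm : Measurable U := Measurable.ennreal_tsum fun k => measurable_const.mul (hΦm k)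
  have hUle : GnormENN μ₁ μ₂ U ≤ 2 := by
    have h1 : GnormENN μ₁ μ₂ U ≤ ∑' k, GnormENN μ₁ μ₂ (fun x => wt k * Φ k x) :=
      GnormENN_tsum_le μ₁ μ₂ fun k => measurable_const.mul (hΦm k)
    have h2 : ∀ k, GnormENN μ₁ μ₂ (fun x => wt k * Φ k x) ≤ (2⁻¹ : ℝ≥0∞) ^ k := by
      intro k
      refine (GnormENN_const_mul_le μ₁ μ₂ (Φ k) (hwtT k)).trans ?_
      rw [hGeq k]
      simp only [hwt]
      rw [mul_assoc, ENNReal.inv_mul_cancel (hG0 k) (hGT k), mul_one]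
    calc GnormENN μ₁ μ₂ U ≤ ∑' k, (2⁻¹ : ℝ≥0∞) ^ k := h1.trans (ENNReal.tsum_le_tsum h2)
      _ = 2 := by rw [ENNReal.tsum_geometric, ENNReal.one_sub_inv_two, inv_inv]
  set H : X₁ × X₂ → ℂ := fun x => (((U x).toReal / v x : ℝ) : ℂ) with hHdef
  have hHm : Measurable H := Complex.measurable_ofReal.comp (hUm.ennreal_toReal.div hv)
  have hvH : ∀ x, (‖(v x : ℂ) * H x‖₊ : ℝ≥0∞) = ENNReal.ofReal ((U x).toReal) := by
    intro x
    rw [hvmul H x]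
    simp only [hHdef]
    rw [Complex.nnnorm_real,
      ← enorm_eq_nnnorm ((U x).toReal / v x), Real.enorm_eq_ofReal (div_nonneg ENNReal.toReal_nonneg (hv_pos x).le),
      ← ENNReal.ofReal_mul (hv_pos x).le]
    congr 1
    rw [mul_comm, div_mul_cancel₀ _ (hv_pos x).ne']
  have hGH : Gnorm μ₁ μ₂ (fun x => (v x : ℂ) * H x) ≤ 2 := by
    rw [Gnorm_eq_GnormENN]
    refine le_trans (GnormENN_mono μ₁ μ₂ fun x => ?_) hUle
    rw [hvH x]
    exact ENNReal.ofReal_toReal_le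
  have hHmem : B.Mem H :=
    hmem H hHm (lt_of_le_of_lt hGH (lt_top_iff_ne_top.2 ENNReal.ofNat_ne_top))
  obtain ⟨N, hN⟩ : ∃ N : ℕ, B.norm H < 2 ^ N :=
    pow_unbounded_of_one_lt (B.norm H) one_lt_two
  have hUfin : ∀ᵐ x ∂(μ₁.prod μ₂), U x ≠ ∞ := by
    have hint : ∫⁻ x, U x ∂(μ₁.prod μ₂) ≠ ∞ := by
      refine ne_of_lt (lt_of_le_of_lt ?_ (lt_top_iff_ne_top.2 (ENNReal.ofNat_ne_top (n := 2))))
      exact le_trans ((le_max_left _ _).trans (le_max_left _ _)) hUle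
    exact (ae_lt_top hUm hint).mono fun x hx => hx.ne
  set cst : ℝ := (2 : ℝ) ^ N * (G N).toReal with hcst
  have htR : 0 < (G N).toReal := ENNReal.toReal_pos (hG0 N) (hGT N)
  have hcst_pos : 0 < cst := by
    rw [hcst]
    positivity
  have hcomp : ∀ᵐ x ∂(μ₁.prod μ₂), ‖F N x‖ ≤ ‖((cst : ℝ) : ℂ) * H x‖ := by
    filter_upwards [hUfin] with x hx
    have h1 : Φ N x ≤ (wt N)⁻¹ * U x := by
      calc Φ N x = (wt N)⁻¹ * (wt N * Φ N x) := by
            rw [← mul_assoc, ENNReal.inv_mul_cancel (hwt0 N) (hwtT N), one_mul]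
        _ ≤ (wt N)⁻¹ * U x := mul_le_mul_right (ENNReal.le_tsum N) _
    have h2 : U x = ENNReal.ofReal (v x) * (‖H x‖₊ : ℝ≥0∞) := by
      rw [← hvmul H x, hvH x, ENNReal.ofReal_toReal hx]
    have hv0 : ENNReal.ofReal (v x) ≠ 0 := by
      simp only [ne_eq, ENNReal.ofReal_eq_zero, not_le]
      exact hv_pos x
    have h3 : (‖F N x‖₊ : ℝ≥0∞) ≤ (wt N)⁻¹ * (‖H x‖₊ : ℝ≥0∞) := by
      rw [← ENNReal.mul_le_mul_iff_right hv0 ENNReal.ofReal_ne_top]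
      calc ENNReal.ofReal (v x) * (‖F N x‖₊ : ℝ≥0∞) = Φ N x := by
            simp only [hΦ]
            rw [hvmul (F N) x]
        _ ≤ (wt N)⁻¹ * U x := h1
        _ = (wt N)⁻¹ * (ENNReal.ofReal (v x) * (‖H x‖₊ : ℝ≥0∞)) := by rw [← h2]
        _ = ENNReal.ofReal (v x) * ((wt N)⁻¹ * (‖H x‖₊ : ℝ≥0∞)) := by ring
    have h4 : (wt N)⁻¹ = ENNReal.ofReal cst := by
      simp only [hwt, hcst]
      rw [ENNReal.mul_inv (Or.inl (pow_ne_zero N (by norm_num)))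
        (Or.inl (ENNReal.pow_ne_top (by norm_num))), ENNReal.inv_pow, inv_inv, inv_inv,
        ENNReal.ofReal_mul (by positivity), ENNReal.ofReal_pow (by norm_num : (0:ℝ) ≤ 2),
        ENNReal.ofReal_ofNat, ENNReal.ofReal_toReal (hGT N)]
    have h5 : (‖((cst : ℝ) : ℂ) * H x‖₊ : ℝ≥0∞) = ENNReal.ofReal cst * (‖H x‖₊ : ℝ≥0∞) := by
      rw [nnnorm_mul, ENNReal.coe_mul, Complex.nnnorm_real,
        ← enorm_eq_nnnorm cst, Real.enorm_eq_ofReal hcst_pos.le]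
    have h6 : (‖F N x‖₊ : ℝ≥0∞) ≤ (‖((cst : ℝ) : ℂ) * H x‖₊ : ℝ≥0∞) := by
      rw [h5, ← h4]
      exact h3
    have h7 : ‖F N x‖₊ ≤ ‖((cst : ℝ) : ℂ) * H x‖₊ := by exact_mod_cast h6
    calc ‖F N x‖ = (‖F N x‖₊ : ℝ) := (coe_nnnorm _).symm
      _ ≤ (‖((cst : ℝ) : ℂ) * H x‖₊ : ℝ) := by exact_mod_cast h7
      _ = ‖((cst : ℝ) : ℂ) * H x‖ := coe_nnnorm _
  have hae : ∀ᵐ x ∂(μ₁.prod μ₂), ‖F N x‖ ≤ ‖(((cst : ℝ) : ℂ) • H) x‖ := by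
    filter_upwards [hcomp] with x hx
    simpa [Pi.smul_apply, smul_eq_mul] using hx
  have hsolid := B.solid (((cst : ℝ) : ℂ) • H) (F N) (B.smul_mem _ _ hHmem) (hFm N) hae
  have hnorm_smul : B.norm (((cst : ℝ) : ℂ) • H) = cst * B.norm H := by
    rw [B.norm_smul' _ _ hHmem]
    congr 1
    rw [Complex.norm_real, Real.norm_eq_abs, abs_of_nonneg hcst_pos.le]
  have hfinal : (4 : ℝ) ^ N * (G N).toReal < 2 ^ N * (G N).toReal * B.norm H := by
    calc (4 : ℝ) ^ N * (G N).toReal < B.norm (F N) := hFbig N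
      _ ≤ B.norm (((cst : ℝ) : ℂ) • H) := hsolid.2
      _ = 2 ^ N * (G N).toReal * B.norm H := by rw [hnorm_smul, hcst]
  have h4eq : (4 : ℝ) ^ N = 2 ^ N * 2 ^ N := by
    rw [← mul_pow]; norm_num
  have h2N : (2 : ℝ) ^ N < B.norm H := by
    have hpos : (0 : ℝ) < 2 ^ N * (G N).toReal := by positivity
    have hlt : (2 ^ N * (G N).toReal) * (2 : ℝ) ^ N
        < (2 ^ N * (G N).toReal) * B.norm H := by
      calc (2 ^ N * (G N).toReal) * (2 : ℝ) ^ N = (2 ^ N * 2 ^ N) * (G N).toReal := by ring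
        _ = 4 ^ N * (G N).toReal := by rw [← h4eq]
        _ < 2 ^ N * (G N).toReal * B.norm H := hfinal
        _ = (2 ^ N * (G N).toReal) * B.norm H := by ring
    exact (mul_lt_mul_iff_right₀ hpos).1 hlt
  exact absurd hN (not_lt.2 h2N.le)

end
end

section
/- Let (X, F, μ) = (X₁ × X₂, F₁ ⊗ F₂, μ₁ ⊗ μ₂), where (X₁, μ₁) and (X₂, μ₂) are σ-finite measure spaces. Then for every V ∈ F₁ and W ∈ F₂, the indicator function satisfies ‖1_{V × W}‖_{𝓗(μ)} ≥ min{1, μ₁(V), μ₂(W), μ(V × W)}. -/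
open MeasureTheory ENNReal Filter

noncomputable section

private lemma mixedNorm_one_top_eq' {α β : Type*} [MeasurableSpace α] [MeasurableSpace β]
    (μ₁ : Measure α) (μ₂ : Measure β) (g : α × β → ℂ) :
    mixedNorm μ₁ μ₂ 1 ∞ g = essSup (fun x₂ => ∫⁻ x₁, (‖g (x₁, x₂)‖₊ : ℝ≥0∞) ∂μ₁) μ₂ := by
  simp [mixedNorm, mixedNormENN, lpNormENN]

private lemma mixedNorm_top_one_eq' {α β : Type*} [MeasurableSpace α] [MeasurableSpace β]
    (μ₁ : Measure α) (μ₂ : Measure β) (g : α × β → ℂ) :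
    mixedNorm μ₁ μ₂ ∞ 1 g = ∫⁻ x₂, essSup (fun x₁ => (‖g (x₁, x₂)‖₊ : ℝ≥0∞)) μ₁ ∂μ₂ := by
  simp [mixedNorm, mixedNormENN, lpNormENN]

private lemma setLIntegral_le_essSup_mul' {α : Type*} [MeasurableSpace α] (μ : Measure α)
    (h : α → ℝ≥0∞) (s : Set α) : ∫⁻ x in s, h x ∂μ ≤ essSup h μ * μ s := by
  calc ∫⁻ x in s, h x ∂μ ≤ ∫⁻ _ in s, essSup h μ ∂μ :=
        lintegral_mono_ae (ae_restrict_of_ae (ae_le_essSup h))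
    _ = essSup h μ * μ s := setLIntegral_const s _

/-- Lower bound for the `𝓗`-norm of the indicator of a measurable rectangle
(Lemma `lem:CartesianProductSumNorm`). -/
theorem indicator_Hnorm_lower_bound
    {X₁ X₂ : Type*} [MeasurableSpace X₁] [MeasurableSpace X₂]
    (μ₁ : Measure X₁) (μ₂ : Measure X₂) [SigmaFinite μ₁] [SigmaFinite μ₂]
    (V : Set X₁) (W : Set X₂) (hV : MeasurableSet V) (hW : MeasurableSet W) :
    min (min 1 (μ₁ V)) (min (μ₂ W) ((μ₁.prod μ₂) (V ×ˢ W))) ≤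
      Hnorm μ₁ μ₂ ((V ×ˢ W).indicator fun _ => (1 : ℂ)) := by
  refine le_iInf fun g => le_iInf fun hg => ?_
  obtain ⟨hm1, hm2, hm3, hm4, hsum⟩ := hg
  set N₁ := eLpNorm g.1 1 (μ₁.prod μ₂) with hN₁
  set N₂ := eLpNorm g.2.1 ∞ (μ₁.prod μ₂) with hN₂
  set N₃ := mixedNorm μ₁ μ₂ 1 ∞ g.2.2.1 with hN₃
  set N₄ := mixedNorm μ₁ μ₂ ∞ 1 g.2.2.2 with hN₄
  by_contra hlt
  push_neg at hlt
  set S := N₁ + N₂ + N₃ + N₄ with hS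
  obtain ⟨c, hSc, hcm⟩ := exists_between hlt
  rw [lt_min_iff, lt_min_iff, lt_min_iff, Measure.prod_prod] at hcm
  obtain ⟨⟨hc1, hcV⟩, hcW, hcVW⟩ := hcm
  -- approximating sets
  set A : ℕ → Set X₁ := fun n => V ∩ spanningSets μ₁ n with hA
  set B : ℕ → Set X₂ := fun n => W ∩ spanningSets μ₂ n with hB
  have hAm : ∀ n, MeasurableSet (A n) := fun n => hV.inter (measurableSet_spanningSets μ₁ n)
  have hBm : ∀ n, MeasurableSet (B n) := fun n => hW.inter (measurableSet_spanningSets μ₂ n)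
  have hAmono : Monotone A := fun m n h =>
    Set.inter_subset_inter_right _ (monotone_spanningSets μ₁ h)
  have hBmono : Monotone B := fun m n h =>
    Set.inter_subset_inter_right _ (monotone_spanningSets μ₂ h)
  have hAfin : ∀ n, μ₁ (A n) ≠ ∞ := fun n =>
    ((measure_mono Set.inter_subset_right).trans_lt (measure_spanningSets_lt_top μ₁ n)).ne
  have hBfin : ∀ n, μ₂ (B n) ≠ ∞ := fun n =>
    ((measure_mono Set.inter_subset_right).trans_lt (measure_spanningSets_lt_top μ₂ n)).ne
  have hAV : μ₁ V = ⨆ n, μ₁ (A n) := by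
    conv_lhs => rw [show V = ⋃ n, A n by
      rw [hA, ← Set.inter_iUnion, iUnion_spanningSets, Set.inter_univ]]
    exact hAmono.measure_iUnion
  have hBW : μ₂ W = ⨆ n, μ₂ (B n) := by
    conv_lhs => rw [show W = ⋃ n, B n by
      rw [hB, ← Set.inter_iUnion, iUnion_spanningSets, Set.inter_univ]]
    exact hBmono.measure_iUnion
  -- choose a large index
  rw [hAV] at hcV
  rw [hBW] at hcW
  rw [hAV, hBW, ENNReal.iSup_mul] at hcVW
  simp_rw [ENNReal.mul_iSup] at hcVW
  obtain ⟨n₁, hn₁⟩ := lt_iSup_iff.mp hcV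
  obtain ⟨n₂, hn₂⟩ := lt_iSup_iff.mp hcW
  obtain ⟨n₃, hn₃⟩ := lt_iSup_iff.mp hcVW
  obtain ⟨n₄, hn₄⟩ := lt_iSup_iff.mp hn₃
  set N := max (max n₁ n₂) (max n₃ n₄) with hNdef
  set a := μ₁ (A N) with ha
  set b := μ₂ (B N) with hb
  have hca : c < a := hn₁.trans_le (measure_mono (hAmono (le_max_of_le_left (le_max_left _ _))))
  have hcb : c < b := hn₂.trans_le (measure_mono (hBmono (le_max_of_le_left (le_max_right _ _))))
  have hcab : c < a * b := hn₄.trans_le (mul_le_mul'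
    (measure_mono (hAmono (le_max_of_le_right (le_max_left _ _))))
    (measure_mono (hBmono (le_max_of_le_right (le_max_right _ _)))))
  have hafin : a ≠ ∞ := hAfin N
  have hbfin : b ≠ ∞ := hBfin N
  -- main estimate
  set s := A N ×ˢ B N with hs
  have hsm : MeasurableSet s := (hAm N).prod (hBm N)
  have hsub : s ⊆ V ×ˢ W := Set.prod_mono Set.inter_subset_left Set.inter_subset_left
  have hμs : (μ₁.prod μ₂) s = a * b := by rw [hs, Measure.prod_prod]
  set f := (V ×ˢ W).indicator fun _ => (1 : ℂ) with hf
  have h0 : ∫⁻ z in s, (‖f z‖₊ : ℝ≥0∞) ∂(μ₁.prod μ₂) = a * b := by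
    rw [setLIntegral_congr_fun hsm (fun z hz => ?_), setLIntegral_one, hμs]
    rw [hf, Set.indicator_of_mem (hsub hz)]
    simp
  have hpt : ∀ z, (‖f z‖₊ : ℝ≥0∞) ≤
      (‖g.1 z‖₊ : ℝ≥0∞) + ‖g.2.1 z‖₊ + ‖g.2.2.1 z‖₊ + ‖g.2.2.2 z‖₊ := by
    intro z
    have h : f z = g.1 z + g.2.1 z + g.2.2.1 z + g.2.2.2 z := by rw [hsum]; rfl
    rw [h]
    refine le_trans (ENNReal.coe_le_coe.mpr ((nnnorm_add_le _ _).trans (add_le_add_left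
      ((nnnorm_add_le _ _).trans (add_le_add_left (nnnorm_add_le _ _) _)) _))) ?_
    rw [ENNReal.coe_add, ENNReal.coe_add, ENNReal.coe_add]
  have hsplit : ∫⁻ z in s, (‖f z‖₊ : ℝ≥0∞) ∂(μ₁.prod μ₂) ≤
      (∫⁻ z in s, (‖g.1 z‖₊ : ℝ≥0∞) ∂(μ₁.prod μ₂)) +
      (∫⁻ z in s, (‖g.2.1 z‖₊ : ℝ≥0∞) ∂(μ₁.prod μ₂)) +
      (∫⁻ z in s, (‖g.2.2.1 z‖₊ : ℝ≥0∞) ∂(μ₁.prod μ₂)) +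
      (∫⁻ z in s, (‖g.2.2.2 z‖₊ : ℝ≥0∞) ∂(μ₁.prod μ₂)) := by
    calc ∫⁻ z in s, (‖f z‖₊ : ℝ≥0∞) ∂(μ₁.prod μ₂)
        ≤ ∫⁻ z in s, ((‖g.1 z‖₊ : ℝ≥0∞) + ‖g.2.1 z‖₊ + ‖g.2.2.1 z‖₊ + ‖g.2.2.2 z‖₊)
            ∂(μ₁.prod μ₂) := lintegral_mono hpt
      _ = _ := by
          rw [lintegral_add_right _ hm4.nnnorm.coe_nnreal_ennreal, lintegral_add_right _ hm3.nnnorm.coe_nnreal_ennreal,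
            lintegral_add_right _ hm2.nnnorm.coe_nnreal_ennreal]
  have hb1 : ∫⁻ z in s, (‖g.1 z‖₊ : ℝ≥0∞) ∂(μ₁.prod μ₂) ≤ N₁ := by
    rw [hN₁, eLpNorm_one_eq_lintegral_enorm]
    exact setLIntegral_le_lintegral _ _
  have hb2 : ∫⁻ z in s, (‖g.2.1 z‖₊ : ℝ≥0∞) ∂(μ₁.prod μ₂) ≤ N₂ * (a * b) := by
    rw [hN₂, eLpNorm_exponent_top, eLpNormEssSup, ← hμs]
    exact setLIntegral_le_essSup_mul' _ _ _
  have hb3 : ∫⁻ z in s, (‖g.2.2.1 z‖₊ : ℝ≥0∞) ∂(μ₁.prod μ₂) ≤ N₃ * b := by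
    rw [hs, ← Measure.prod_restrict, lintegral_prod_symm' _ hm3.nnnorm.coe_nnreal_ennreal]
    calc ∫⁻ x₂ in B N, ∫⁻ x₁ in A N, (‖g.2.2.1 (x₁, x₂)‖₊ : ℝ≥0∞) ∂μ₁ ∂μ₂
        ≤ ∫⁻ _ in B N, N₃ ∂μ₂ := by
          refine lintegral_mono_ae (ae_restrict_of_ae ?_)
          filter_upwards [ae_le_essSup
            (fun x₂ => ∫⁻ x₁, (‖g.2.2.1 (x₁, x₂)‖₊ : ℝ≥0∞) ∂μ₁) (μ := μ₂)] with x₂ hx₂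
          exact (setLIntegral_le_lintegral _ _).trans
            (hx₂.trans_eq (mixedNorm_one_top_eq' μ₁ μ₂ g.2.2.1).symm)
      _ = N₃ * b := setLIntegral_const _ _
  have hb4 : ∫⁻ z in s, (‖g.2.2.2 z‖₊ : ℝ≥0∞) ∂(μ₁.prod μ₂) ≤ N₄ * a := by
    rw [hs, ← Measure.prod_restrict, lintegral_prod_symm' _ hm4.nnnorm.coe_nnreal_ennreal]
    calc ∫⁻ x₂ in B N, ∫⁻ x₁ in A N, (‖g.2.2.2 (x₁, x₂)‖₊ : ℝ≥0∞) ∂μ₁ ∂μ₂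
        ≤ ∫⁻ x₂ in B N, essSup (fun x₁ => (‖g.2.2.2 (x₁, x₂)‖₊ : ℝ≥0∞)) μ₁ * a ∂μ₂ :=
          lintegral_mono fun x₂ => setLIntegral_le_essSup_mul' _ _ _
      _ ≤ ∫⁻ x₂, essSup (fun x₁ => (‖g.2.2.2 (x₁, x₂)‖₊ : ℝ≥0∞)) μ₁ * a ∂μ₂ :=
          setLIntegral_le_lintegral _ _
      _ = (∫⁻ x₂, essSup (fun x₁ => (‖g.2.2.2 (x₁, x₂)‖₊ : ℝ≥0∞)) μ₁ ∂μ₂) * a :=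
          lintegral_mul_const' a _ hafin
      _ = N₄ * a := by rw [hN₄, mixedNorm_top_one_eq']
  have key : a * b ≤ N₁ + N₂ * (a * b) + N₃ * b + N₄ * a := by
    calc a * b = ∫⁻ z in s, (‖f z‖₊ : ℝ≥0∞) ∂(μ₁.prod μ₂) := h0.symm
      _ ≤ _ := hsplit
      _ ≤ N₁ + N₂ * (a * b) + N₃ * b + N₄ * a :=
          add_le_add (add_le_add (add_le_add hb1 hb2) hb3) hb4
  -- the scaling factor
  set M := max 1 (max a (max b (a * b))) with hM
  have hM1 : (1 : ℝ≥0∞) ≤ M := le_max_left _ _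
  have hMa : a ≤ M := le_max_of_le_right (le_max_left _ _)
  have hMb : b ≤ M := le_max_of_le_right (le_max_of_le_right (le_max_left _ _))
  have hMab : a * b ≤ M := le_max_of_le_right (le_max_of_le_right (le_max_right _ _))
  have hM0 : M ≠ 0 := fun h => by simp [h] at hM1
  have hMtop : M ≠ ∞ := by
    have : M < ∞ := max_lt (by simp) (max_lt hafin.lt_top (max_lt hbfin.lt_top
      (ENNReal.mul_lt_top hafin.lt_top hbfin.lt_top)))
    exact this.ne
  have h5 : c * M ≤ a * b := by
    rw [hM]
    rcases max_choice 1 (max a (max b (a * b))) with h | h <;> rw [h]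
    · rw [mul_one]; exact hcab.le
    · rcases max_choice a (max b (a * b)) with h' | h' <;> rw [h']
      · calc c * a ≤ b * a := mul_le_mul_left hcb.le a
          _ = a * b := mul_comm _ _
      · rcases max_choice b (a * b) with h'' | h'' <;> rw [h'']
        · exact mul_le_mul_left hca.le b
        · calc c * (a * b) ≤ 1 * (a * b) := mul_le_mul_left hc1.le _
            _ = a * b := one_mul _
  have h6 : a * b ≤ S * M := by
    calc a * b ≤ N₁ + N₂ * (a * b) + N₃ * b + N₄ * a := key
      _ ≤ N₁ * M + N₂ * M + N₃ * M + N₄ * M := by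
          gcongr
          exact le_mul_of_one_le_right' hM1
      _ = S * M := by rw [hS]; ring
  have : c ≤ S := by
    rw [← ENNReal.mul_le_mul_iff_left hM0 hMtop]
    exact h5.trans h6
  exact absurd this (not_le.mpr hSc)

end
end
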